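/- arXiv:2203.06166 — 4 statements merged into one kernel-verified Lean document; each statement's English description precedes it below -/
import Mathlib

section
/- Let X and Y be T0 topological spaces with countable bases, let δ_X and δ_Y be admissible representations of X and Y respectively. Then a partial function f :⊆ X → Y is continuous (on its domain with the subspace topology) if and only if f is continuous with respect to the representations, i.e., there exists a partial function F :⊆ ℕ^ℕ → ℕ^ℕ, continuous on its domain, such that δ_Y(F(p)) = f(δ_X(p)) for all p ∈ dom(f∘δ_X). -/
/-! Kreitz–Weihrauch theorem: for admissibly represented countably based T₀ spaces,
a partial function is continuous iff it is continuous with respect to the representations. -/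

abbrev Baire : Type := ℕ → ℕ

/-- A representation of a set `X`: a partial surjection from Baire space onto `X`,
modelled as a total map together with a domain, surjective on that domain. -/
structure PartialRep (X : Type*) where
  dom : Set Baire
  map : Baire → X
  surj : ∀ x : X, ∃ p ∈ dom, map p = x

/-- A representation is continuous if it is continuous on its domain
(with the subspace topology). -/
def PartialRep.IsContinuous {X : Type*} [TopologicalSpace X] (δ : PartialRep X) : Prop :=
  ContinuousOn δ.map δ.dom

/-- `δ'` continuously translates into `δ`: there is a partial function `F` on Baire space,
continuous on its domain, with `δ(F(p)) = δ'(p)` for all `p ∈ dom(δ')`. -/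
def Translates {X : Type*} (δ' δ : PartialRep X) : Prop :=
  ∃ (Fd : Set Baire) (F : Baire → Baire), ContinuousOn F Fd ∧
    ∀ p ∈ δ'.dom, p ∈ Fd ∧ F p ∈ δ.dom ∧ δ.map (F p) = δ'.map p

/-- A representation of a topological space is admissible if it is continuous and
maximal among continuous representations w.r.t. continuous reducibility. -/
def PartialRep.IsAdmissible {X : Type*} [TopologicalSpace X] (δ : PartialRep X) : Prop :=
  δ.IsContinuous ∧ ∀ δ' : PartialRep X, δ'.IsContinuous → Translates δ' δ

/-! ### Auxiliary material -/

open TopologicalSpace Set Filter Topology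

attribute [local instance] Classical.propDecidable

set_option linter.unusedSectionVars false
set_option linter.deprecated false

lemma isOpen_eval_eq (i m : ℕ) : IsOpen {q : Baire | q i = m} := by
  have : {q : Baire | q i = m} = (fun q : Baire => q i) ⁻¹' {n | n = m} := rfl
  rw [this]
  exact (continuous_apply i).isOpen_preimage _ (isOpen_discrete _)

lemma isOpen_eval_ne (i m : ℕ) : IsOpen {q : Baire | q i ≠ m} := by
  have : {q : Baire | q i ≠ m} = (fun q : Baire => q i) ⁻¹' {n | n ≠ m} := rfl
  rw [this]
  exact (continuous_apply i).isOpen_preimage _ (isOpen_discrete _)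

lemma cylinder_subset_of_mem_nhds {p : Baire} {O : Set Baire} (hO : O ∈ nhds p) :
    ∃ n, {q : Baire | ∀ i < n, q i = p i} ⊆ O := by
  rw [nhds_pi, Filter.mem_pi] at hO
  obtain ⟨I, hI, t, ht, hsub⟩ := hO
  refine ⟨hI.toFinset.sup id + 1, fun q hq => hsub fun i hi => ?_⟩
  have hlt : i < hI.toFinset.sup id + 1 :=
    Nat.lt_succ_of_le (Finset.le_sup (f := id) (hI.mem_toFinset.2 hi))
  rw [hq i hlt]
  exact mem_of_mem_nhds (ht i)

/-! #### The standard representation of a countably based T₀ space -/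

section Rho

variable {X : Type*} [TopologicalSpace X] [T0Space X] [Nonempty X]

/-- Domain of the standard representation associated to a countable basis `B`. -/
def rhoDom (B : ℕ → Set X) : Set Baire :=
  {p | ∃ x : X, ∀ k, x ∈ B k ↔ ∃ i, p i = k + 1}

/-- The standard representation map associated to a countable basis `B`. -/
noncomputable def rhoMap (B : ℕ → Set X) (p : Baire) : X :=
  if h : ∃ x : X, ∀ k, x ∈ B k ↔ ∃ i, p i = k + 1 then h.choose else Classical.arbitrary X

lemma rho_spec {B : ℕ → Set X} {p : Baire} (hp : p ∈ rhoDom B) :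
    ∀ k, (rhoMap B p ∈ B k ↔ ∃ i, p i = k + 1) := by
  have h : ∃ x : X, ∀ k, x ∈ B k ↔ ∃ i, p i = k + 1 := hp
  rw [rhoMap, dif_pos h]
  exact h.choose_spec

lemma rho_eq {B : ℕ → Set X} (hB : IsTopologicalBasis (range B)) {p : Baire} {y : X}
    (hy : ∀ k, y ∈ B k ↔ ∃ i, p i = k + 1) : p ∈ rhoDom B ∧ rhoMap B p = y := by
  have hp : p ∈ rhoDom B := ⟨y, hy⟩
  refine ⟨hp, ?_⟩
  have hs := rho_spec hp
  refine (inseparable_iff_forall_isOpen.2 fun U hU => ⟨fun h => ?_, fun h => ?_⟩).eq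
  · obtain ⟨v, hv, hxv, hvU⟩ := hB.exists_subset_of_mem_open h hU
    obtain ⟨k, rfl⟩ := hv
    exact hvU ((hy k).2 ((hs k).1 hxv))
  · obtain ⟨v, hv, hxv, hvU⟩ := hB.exists_subset_of_mem_open h hU
    obtain ⟨k, rfl⟩ := hv
    exact hvU ((hs k).2 ((hy k).1 hxv))

lemma rho_surj {B : ℕ → Set X} (hB : IsTopologicalBasis (range B)) (x : X) :
    ∃ p ∈ rhoDom B, rhoMap B p = x := by
  obtain ⟨v, hv, hxv, -⟩ := hB.exists_subset_of_mem_open (mem_univ x) isOpen_univ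
  obtain ⟨k0, rfl⟩ := hv
  set p : Baire := fun i => if x ∈ B i then i + 1 else k0 + 1 with hpdef
  have hy : ∀ k, x ∈ B k ↔ ∃ i, p i = k + 1 := by
    intro k
    constructor
    · intro h; exact ⟨k, by simp [hpdef, h]⟩
    · rintro ⟨i, hi⟩
      by_cases h : x ∈ B i
      · simp only [hpdef, if_pos h] at hi
        obtain rfl : i = k := by omega
        exact h
      · simp only [hpdef, if_neg h] at hi
        obtain rfl : k0 = k := by omega
        exact hxv
  obtain ⟨h1, h2⟩ := rho_eq hB hy
  exact ⟨p, h1, h2⟩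

lemma rho_cont {B : ℕ → Set X} (hB : IsTopologicalBasis (range B)) :
    ContinuousOn (rhoMap B) (rhoDom B) := by
  intro p hp
  refine Filter.tendsto_def.mpr fun V hV => ?_
  obtain ⟨U, hUV, hU, hxU⟩ := mem_nhds_iff.1 hV
  obtain ⟨v, hv, hxv, hvU⟩ := hB.exists_subset_of_mem_open hxU hU
  obtain ⟨k, rfl⟩ := hv
  obtain ⟨i, hi⟩ := (rho_spec hp k).1 hxv
  refine mem_nhdsWithin.2 ⟨{q : Baire | q i = p i}, isOpen_eval_eq i (p i), rfl, ?_⟩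
  rintro q ⟨hqi, hq⟩
  exact hUV (hvU ((rho_spec hq k).2 ⟨i, by rw [hqi, hi]⟩))

end Rho

/-! #### Prepending a digit, and the combined representation for the forward direction -/

/-- Tail of a point of Baire space. -/
def tl (p : Baire) : Baire := fun n => p (n + 1)

/-- Prepend a value to a point of Baire space. -/
def cons0 (m : ℕ) (p : Baire) : Baire := fun n => match n with
  | 0 => m
  | n + 1 => p n

lemma continuous_tl : Continuous tl := continuous_pi fun i => continuous_apply (i + 1)

lemma continuous_cons0 (m : ℕ) : Continuous (cons0 m) := by
  refine continuous_pi fun i => ?_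
  cases i with
  | zero => exact continuous_const
  | succ n => exact continuous_apply n

lemma tl_cons0 (m : ℕ) (p : Baire) : tl (cons0 m p) = p := rfl

section Comb
variable {X Y : Type*} (δX : PartialRep X) (δY : PartialRep Y) (D : Set X) (f : X → Y)

/-- Combined representation domain for the forward direction. -/
def combDom : Set Baire :=
  {p | (p 0 = 0 ∧ tl p ∈ δX.dom ∧ δX.map (tl p) ∈ D) ∨ (p 0 ≠ 0 ∧ tl p ∈ δY.dom)}

/-- Combined representation map for the forward direction. -/
noncomputable def combMap : Baire → Y :=
  fun p => if p 0 = 0 then f (δX.map (tl p)) else δY.map (tl p)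

lemma comb_surj : ∀ y : Y, ∃ p ∈ combDom δX δY D, combMap δX δY f p = y := by
  intro y
  obtain ⟨q, hq, hqy⟩ := δY.surj y
  refine ⟨cons0 1 q, Or.inr ⟨one_ne_zero, by rw [tl_cons0]; exact hq⟩, ?_⟩
  show (if (cons0 1 q) 0 = 0 then f (δX.map (tl (cons0 1 q))) else δY.map (tl (cons0 1 q))) = y
  rw [if_neg (show cons0 1 q 0 ≠ 0 from one_ne_zero), tl_cons0, hqy]

lemma comb_cont [TopologicalSpace X] [TopologicalSpace Y]
    (hfc : ContinuousOn f D) (hXc : δX.IsContinuous) (hYc : δY.IsContinuous) :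
    ContinuousOn (combMap δX δY f) (combDom δX δY D) := by
  have hg0 : ContinuousOn (fun q : Baire => f (δX.map (tl q)))
      {q : Baire | tl q ∈ δX.dom ∧ δX.map (tl q) ∈ D} := by
    have h1 : ContinuousOn (fun q : Baire => δX.map (tl q))
        {q : Baire | tl q ∈ δX.dom ∧ δX.map (tl q) ∈ D} := by
      have := hXc.comp continuous_tl.continuousOn
        (fun q (hq : tl q ∈ δX.dom ∧ δX.map (tl q) ∈ D) => hq.1)
      exact this
    have := hfc.comp h1 (fun q hq => hq.2)
    exact this
  have hg1 : ContinuousOn (fun q : Baire => δY.map (tl q)) {q : Baire | tl q ∈ δY.dom} := by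
    have := hYc.comp continuous_tl.continuousOn (fun q (hq : tl q ∈ δY.dom) => hq)
    exact this
  intro p hp
  rcases hp with h | h
  · have hsub : combDom δX δY D ∩ {q : Baire | q 0 = 0} ⊆
        {q : Baire | tl q ∈ δX.dom ∧ δX.map (tl q) ∈ D} := by
      rintro q ⟨hq | hq, hq0⟩
      · exact hq.2
      · exact absurd hq0 hq.1
    have heq : EqOn (combMap δX δY f) (fun q : Baire => f (δX.map (tl q)))
        (combDom δX δY D ∩ {q : Baire | q 0 = 0}) := fun q hq => if_pos hq.2
    have hcw : ContinuousWithinAt (combMap δX δY f)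
        (combDom δX δY D ∩ {q : Baire | q 0 = 0}) p :=
      ((hg0.mono hsub).congr heq) p ⟨Or.inl h, h.1⟩
    exact hcw.mono_of_mem_nhdsWithin (inter_mem self_mem_nhdsWithin
      (mem_nhdsWithin_of_mem_nhds ((isOpen_eval_eq 0 0).mem_nhds h.1)))
  · have hsub : combDom δX δY D ∩ {q : Baire | q 0 ≠ 0} ⊆
        {q : Baire | tl q ∈ δY.dom} := by
      rintro q ⟨hq | hq, hq0⟩
      · exact absurd hq.1 hq0
      · exact hq.2
    have heq : EqOn (combMap δX δY f) (fun q : Baire => δY.map (tl q))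
        (combDom δX δY D ∩ {q : Baire | q 0 ≠ 0}) := fun q hq => if_neg hq.2
    have hcw : ContinuousWithinAt (combMap δX δY f)
        (combDom δX δY D ∩ {q : Baire | q 0 ≠ 0}) p :=
      ((hg1.mono hsub).congr heq) p ⟨Or.inr h, h.1⟩
    exact hcw.mono_of_mem_nhdsWithin (inter_mem self_mem_nhdsWithin
      (mem_nhdsWithin_of_mem_nhds ((isOpen_eval_ne 0 0).mem_nhds h.1)))

end Comb

/-! ### The Kreitz–Weihrauch theorem -/

theorem kreitz_weihrauch {X Y : Type*} [TopologicalSpace X] [TopologicalSpace Y]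
    [T0Space X] [T0Space Y]
    [SecondCountableTopology X] [SecondCountableTopology Y]
    (δX : PartialRep X) (δY : PartialRep Y)
    (hX : δX.IsAdmissible) (hY : δY.IsAdmissible)
    (D : Set X) (f : X → Y) :
    ContinuousOn f D ↔
      ∃ (Fd : Set Baire) (F : Baire → Baire), ContinuousOn F Fd ∧
        ∀ p ∈ δX.dom, δX.map p ∈ D →
          p ∈ Fd ∧ F p ∈ δY.dom ∧ δY.map (F p) = f (δX.map p) := by
  constructor
  · -- continuity implies realizability
    intro hf
    have hc : PartialRep.IsContinuous
        (⟨combDom δX δY D, combMap δX δY f, comb_surj δX δY D f⟩ : PartialRep Y) :=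
      comb_cont δX δY D f hf hX.1 hY.1
    obtain ⟨Gd, G, hGc, hG⟩ := hY.2 _ hc
    refine ⟨cons0 0 ⁻¹' Gd, G ∘ cons0 0,
      hGc.comp (continuous_cons0 0).continuousOn (fun p hp => hp), ?_⟩
    intro p hp hpD
    have hmem : cons0 0 p ∈ combDom δX δY D :=
      Or.inl ⟨rfl, by rw [tl_cons0]; exact hp, by rw [tl_cons0]; exact hpD⟩
    obtain ⟨h1, h2, h3⟩ := hG _ hmem
    refine ⟨h1, h2, ?_⟩
    rw [show (G ∘ cons0 0) p = G (cons0 0 p) from rfl, h3]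
    show (if (cons0 0 p) 0 = 0 then f (δX.map (tl (cons0 0 p))) else δY.map (tl (cons0 0 p)))
      = f (δX.map p)
    rw [if_pos (show cons0 0 p 0 = 0 from rfl), tl_cons0]
  · -- realizability implies continuity
    rintro ⟨Fd, F, hFc, hF⟩
    rcases isEmpty_or_nonempty X with hX0 | hX0
    · have : D = ∅ := eq_empty_of_isEmpty D
      rw [this]
      exact continuousOn_empty f
    · -- get a countable basis indexed by ℕ
      obtain ⟨b, hbc, hbe, hb⟩ := exists_countable_basis X
      have hbnonempty : b.Nonempty := by
        obtain ⟨v, hv, -, -⟩ :=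
          hb.exists_subset_of_mem_open (mem_univ (Classical.arbitrary X)) isOpen_univ
        exact ⟨v, hv⟩
      obtain ⟨B, rfl⟩ := hbc.exists_eq_range hbnonempty
      -- translate the standard representation into δX
      have hρc : PartialRep.IsContinuous
          (⟨rhoDom B, rhoMap B, fun x => rho_surj hb x⟩ : PartialRep X) := rho_cont hb
      obtain ⟨Hd, H, hHc, hH⟩ := hX.2 _ hρc
      -- f ∘ ρ is continuous on T
      set T : Set Baire := {q | q ∈ rhoDom B ∧ rhoMap B q ∈ D} with hT
      have hmaps1 : ∀ q ∈ T, H q ∈ Fd ∧ F (H q) ∈ δY.dom ∧ δY.map (F (H q)) = f (rhoMap B q) := by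
        intro q hq
        obtain ⟨hq1, hq2, hq3⟩ := hH q hq.1
        have hD : δX.map (H q) ∈ D := by rw [hq3]; exact hq.2
        obtain ⟨hr1, hr2, hr3⟩ := hF (H q) hq2 hD
        exact ⟨hr1, hr2, by rw [hr3, hq3]⟩
      have hGc : ContinuousOn (fun q : Baire => δY.map (F (H q))) T := by
        have h1 : ContinuousOn (fun q : Baire => F (H q)) T := by
          have := hFc.comp (hHc.mono (fun q hq => (hH q hq.1).1)) (fun q hq => (hmaps1 q hq).1)
          exact this
        have := hY.1.comp h1 (fun q hq => (hmaps1 q hq).2.1)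
        exact this
      have hkey : ContinuousOn (fun q : Baire => f (rhoMap B q)) T :=
        hGc.congr fun q hq => ((hmaps1 q hq).2.2).symm
      -- conclude continuity of f on D
      intro x hxD
      refine Filter.tendsto_def.mpr fun V hV => ?_
      obtain ⟨V', hV'V, hV'o, hfxV'⟩ := mem_nhds_iff.1 hV
      obtain ⟨p, hpdom, hpx⟩ := rho_surj hb x
      have hpT : p ∈ T := ⟨hpdom, by rw [hpx]; exact hxD⟩
      have hmem : (fun q : Baire => f (rhoMap B q)) ⁻¹' V' ∈ nhdsWithin p T :=
        (hkey p hpT).preimage_mem_nhdsWithin (hV'o.mem_nhds (by rw [hpx]; exact hfxV'))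
      obtain ⟨O, hOo, hpO, hOT⟩ := mem_nhdsWithin.1 hmem
      obtain ⟨n, hcyl⟩ := cylinder_subset_of_mem_nhds (hOo.mem_nhds hpO)
      -- the open neighborhood of x
      refine mem_nhdsWithin.2 ⟨⋂ i ∈ Finset.range n, {y : X | ∀ k, p i = k + 1 → y ∈ B k},
        ?_, ?_, ?_⟩
      · refine isOpen_biInter_finset fun i _ => ?_
        by_cases h : p i = 0
        · have : {y : X | ∀ k, p i = k + 1 → y ∈ B k} = univ := by
            ext y
            simp only [mem_setOf_eq, mem_univ, iff_true]
            intro k hk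
            exact absurd hk (by omega)
          rw [this]; exact isOpen_univ
        · obtain ⟨m, hm⟩ : ∃ m, p i = m + 1 := ⟨p i - 1, by omega⟩
          have : {y : X | ∀ k, p i = k + 1 → y ∈ B k} = B m := by
            ext y
            constructor
            · intro hy; exact hy m hm
            · intro hy k hk
              obtain rfl : m = k := by omega
              exact hy
          rw [this]
          exact hb.isOpen ⟨m, rfl⟩
      · simp only [mem_iInter, mem_setOf_eq]
        intro i _ k hk
        have : rhoMap B p ∈ B k := (rho_spec hpdom k).2 ⟨i, hk⟩
        rwa [hpx] at this
      · rintro y ⟨hyU, hyD⟩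
        simp only [mem_iInter, mem_setOf_eq, Finset.mem_range] at hyU
        -- construct a name q of y extending p|n
        obtain ⟨v0, hv0, hyv0, -⟩ := hb.exists_subset_of_mem_open (mem_univ y) isOpen_univ
        obtain ⟨k0, rfl⟩ := hv0
        set q : Baire := fun i =>
          if i < n then p i else (if y ∈ B (i - n) then (i - n) + 1 else 0) with hqdef
        have hqy : ∀ k, y ∈ B k ↔ ∃ i, q i = k + 1 := by
          intro k
          constructor
          · intro h
            refine ⟨n + k, ?_⟩
            simp only [hqdef]
            rw [if_neg (by omega), Nat.add_sub_cancel_left, if_pos h]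
          · rintro ⟨i, hi⟩
            simp only [hqdef] at hi
            by_cases h1 : i < n
            · rw [if_pos h1] at hi
              exact hyU i h1 k hi
            · rw [if_neg h1] at hi
              by_cases h2 : y ∈ B (i - n)
              · rw [if_pos h2] at hi
                obtain rfl : i - n = k := by omega
                exact h2
              · rw [if_neg h2] at hi
                exact absurd hi (by omega)
        obtain ⟨hqdom, hqmap⟩ := rho_eq hb hqy
        have hqcyl : q ∈ {r : Baire | ∀ i < n, r i = p i} := by
          intro i hi
          simp only [hqdef]
          rw [if_pos hi]
        have hqT : q ∈ T := ⟨hqdom, by rw [hqmap]; exact hyD⟩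
        have hmem2 : f (rhoMap B q) ∈ V' := hOT ⟨hcyl hqcyl, hqT⟩
        rw [hqmap] at hmem2
        exact hV'V hmem2
end

section
/- The problems EC, (ρ′→ρ), (ρ′→ρ_>), (ρ_<→ρ_>) and (ρ_<→ρ) are pairwise continuously Weihrauch equivalent: EC ≡_W (ρ′→ρ) ≡_W (ρ′→ρ_>) ≡_W (ρ_<→ρ_>) ≡_W (ρ_<→ρ). -/
open Filter Topology

/-- The pairing `⟨p,q⟩(2n) = p(n)`, `⟨p,q⟩(2n+1) = q(n)`. -/
def pairB (p q : Baire) : Baire := fun n => if n % 2 = 0 then p (n / 2) else q (n / 2)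

/-- A problem: a partial multivalued function on Baire space. -/
structure Problem where
  dom : Set Baire
  sol : Baire → Set Baire

/-- Continuous Weihrauch reducibility. -/
def WRed (f g : Problem) : Prop :=
  ∃ (Kd Hd : Set Baire) (K H : Baire → Baire),
    ContinuousOn K Kd ∧ ContinuousOn H Hd ∧
      ∀ p ∈ f.dom, p ∈ Kd ∧ K p ∈ g.dom ∧
        ∀ q ∈ g.sol (K p), pairB p q ∈ Hd ∧ H (pairB p q) ∈ f.sol p

/-- Strong continuous Weihrauch reducibility. -/
def SWRed (f g : Problem) : Prop :=
  ∃ (Kd Hd : Set Baire) (K H : Baire → Baire),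
    ContinuousOn K Kd ∧ ContinuousOn H Hd ∧
      ∀ p ∈ f.dom, p ∈ Kd ∧ K p ∈ g.dom ∧
        ∀ q ∈ g.sol (K p), q ∈ Hd ∧ H q ∈ f.sol p

def WEquiv (f g : Problem) : Prop := WRed f g ∧ WRed g f
def SWEquiv (f g : Problem) : Prop := SWRed f g ∧ SWRed g f
def WLt (f g : Problem) : Prop := WRed f g ∧ ¬ WRed g f

/-- `range(p-1)`. -/
def rangeM (p : Baire) : Set ℕ := {n | ∃ i, p i = n + 1}

/-- Characteristic function of a set of naturals. -/
noncomputable def chi (A : Set ℕ) : Baire := A.indicator fun _ => 1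

noncomputable def EC : Problem where
  dom := Set.univ
  sol := fun p => {chi (rangeM p)}

noncomputable def EC1 : Problem where
  dom := {p | ((rangeM p)ᶜ).encard ≤ 1}
  sol := fun p => {chi (rangeM p)}

def pfst (r : Baire) : Baire := fun n => r (2 * n)
def psnd (r : Baire) : Baire := fun n => r (2 * n + 1)

noncomputable def SEP : Problem where
  dom := {r | rangeM (pfst r) ∩ rangeM (psnd r) = ∅}
  sol := fun r =>
    {s | ∃ A : Set ℕ, s = chi A ∧ rangeM (pfst r) ⊆ A ∧ A ⊆ (rangeM (psnd r))ᶜ}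

noncomputable def SEP1 : Problem where
  dom := {r | rangeM (pfst r) ∩ rangeM (psnd r) = ∅ ∧
    ((rangeM (pfst r) ∪ rangeM (psnd r))ᶜ).encard ≤ 1}
  sol := SEP.sol

/- rationals -/
def ratEnum (i : ℕ) : ℚ :=
  ((i.unpair.1 : ℚ) - (i.unpair.2.unpair.1 : ℚ)) / ((i.unpair.2.unpair.2 : ℚ) + 1)

def rhoCauchy (p : Baire) (x : ℝ) : Prop :=
  ∀ n, |(ratEnum (p n) : ℝ) - x| ≤ (2 : ℝ) ^ (-(n : ℤ))

def rhoNaive (p : Baire) (x : ℝ) : Prop :=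
  Tendsto (fun n => ((ratEnum (p n) : ℝ))) atTop (nhds x)

def rhoLt (p : Baire) (x : ℝ) : Prop := rangeM p = {n | (ratEnum n : ℝ) < x}
def rhoGt (p : Baire) (x : ℝ) : Prop := rangeM p = {n | x < (ratEnum n : ℝ)}

def rhoCfLt (p : Baire) (x : ℝ) : Prop :=
  (∀ n, p n ≤ 1) ∧ ∀ n, (p n = 1 ↔ (ratEnum n : ℝ) < x)
def rhoCfGt (p : Baire) (x : ℝ) : Prop :=
  (∀ n, p n ≤ 1) ∧ ∀ n, (p n = 1 ↔ x < (ratEnum n : ℝ))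

noncomputable def cfTail : List ℕ → ℝ
  | [] => 0
  | b :: l => 1 / ((b : ℝ) + cfTail l)

noncomputable def cfApprox (p : Baire) (k : ℕ) : ℝ :=
  ((Denumerable.ofNat ℤ (p 0) : ℤ) : ℝ) + cfTail ((List.range k).map fun i => p (i + 1))

def rhoCf (p : Baire) (x : ℝ) : Prop :=
  ((∀ i, 1 ≤ i → 1 ≤ p i) ∧ Tendsto (cfApprox p) atTop (nhds x)) ∨
    (∃ k, 1 ≤ k ∧ p k = 0 ∧ (∀ i, 1 ≤ i → i < k → 1 ≤ p i) ∧
      (2 ≤ k → 2 ≤ p (k - 1)) ∧ x = cfApprox p (k - 1))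

def rhoDec (p : Baire) (x : ℝ) : Prop :=
  (∀ n, 1 ≤ n → p n ≤ 9) ∧
    x = ((Denumerable.ofNat ℤ (p 0) : ℤ) : ℝ) + ∑' n : ℕ, (p (n + 1) : ℝ) / 10 ^ (n + 1)

/-- The implication problem between two representations of ℝ. -/
def implProblem (d1 d2 : Baire → ℝ → Prop) : Problem where
  dom := {p | ∃ x, d1 p x}
  sol := fun p => {q | ∃ x, d1 p x ∧ d2 q x}

/- trees / WKL / choice on Cantor space -/
def wordCode : List Bool → ℕ
  | [] => 0
  | b :: w => 2 * wordCode w + (if b then 2 else 1)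

def prefixList (x : Baire) (k : ℕ) : List Bool := (List.range k).map fun i => decide (x i = 1)

def isTreeCode (t : Baire) : Prop :=
  (∀ n, t n ≤ 1) ∧
    ∀ w v : List Bool, w <+: v → t (wordCode v) = 1 → t (wordCode w) = 1

def WKL : Problem where
  dom := {t | isTreeCode t ∧ {w : List Bool | t (wordCode w) = 1}.Infinite}
  sol := fun t => {x | (∀ n, x n ≤ 1) ∧ ∀ k, t (wordCode (prefixList x k)) = 1}

def Ap (p : Baire) : Set Baire :=
  {x | (∀ n, x n ≤ 1) ∧ ∀ k, wordCode (prefixList x k) ∉ rangeM p}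

def CCantor : Problem where
  dom := {p | (Ap p).Nonempty}
  sol := Ap

def Cle2 : Problem where
  dom := {p | (Ap p).Nonempty ∧ (Ap p).encard ≤ 2}
  sol := Ap

/- limit and parallelization -/
def projCount (r : Baire) (n : ℕ) : Baire := fun k => r (Nat.pair n k)

def limP : Problem where
  dom := {r | ∃ q : Baire, ∀ k, Tendsto (fun n => projCount r n k) atTop (nhds (q k))}
  sol := fun r => {q | ∀ k, Tendsto (fun n => projCount r n k) atTop (nhds (q k))}

def parallel (f : Problem) : Problem where
  dom := {r | ∀ n, projCount r n ∈ f.dom}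
  sol := fun r => {s | ∀ n, projCount s n ∈ f.sol (projCount r n)}

def MCT : Problem where
  dom := {r | ∃ xs : ℕ → ℝ, (∀ n, rhoCauchy (projCount r n) (xs n)) ∧
    Monotone xs ∧ BddAbove (Set.range xs)}
  sol := fun r => {q | ∃ xs : ℕ → ℝ, (∀ n, rhoCauchy (projCount r n) (xs n)) ∧
    Monotone xs ∧ BddAbove (Set.range xs) ∧ rhoCauchy q (⨆ n, xs n)}

/- SORT and RAT -/
open Classical in
noncomputable def sortOut (p : Baire) : Baire := fun k =>
  if {i | p i = 0}.Infinite then 0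
  else if k < {i | p i = 0}.ncard then 0 else 1

noncomputable def SORT : Problem where
  dom := {p | ∀ n, p n ≤ 1}
  sol := fun p => {sortOut p}

def znk (n : ℕ) : Baire := fun k => if k < n then 0 else 1

def RAT : Problem where
  dom := {p | ∃ x, rhoCauchy p x}
  sol := fun p => {s | ∃ x, rhoCauchy p x ∧
    ((∃ n, x = (ratEnum n : ℝ) ∧ s = znk n) ∨
      ((∀ r : ℚ, x ≠ (r : ℝ)) ∧ s = fun _ => 0))}

/- omniscience principles -/
def projFin (m i : ℕ) (r : Baire) : Baire := fun k => r (m * k + i - 1)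
def isZeroSeq (p : Baire) : Prop := ∀ k, p k = 0
def constSeq (i : ℕ) : Baire := fun _ => i

noncomputable def LPOn (n : ℕ) : Problem where
  dom := Set.univ
  sol := fun r => {constSeq ({i | 1 ≤ i ∧ i ≤ n ∧ isZeroSeq (projFin n i r)}.ncard)}

def LLPOn (n : ℕ) : Problem where
  dom := {r | {i | 1 ≤ i ∧ i ≤ n ∧ ¬ isZeroSeq (projFin n i r)}.encard ≤ 1}
  sol := fun r => {s | ∃ i, 1 ≤ i ∧ i ≤ n ∧ isZeroSeq (projFin n i r) ∧ s = constSeq i}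

def MLPOn (n : ℕ) : Problem where
  dom := {r | ∃ i, 1 ≤ i ∧ i ≤ n ∧ isZeroSeq (projFin n i r)}
  sol := fun r => {s | ∃ i, 1 ≤ i ∧ i ≤ n ∧ isZeroSeq (projFin n i r) ∧ s = constSeq i}

def LPO : Problem where
  dom := Set.univ
  sol := fun p => {s | (isZeroSeq p ∧ s = constSeq 1) ∨ (¬ isZeroSeq p ∧ s = constSeq 0)}

/- choice problems on ℕ etc. -/
def Cfin (n : ℕ) : Problem where
  dom := {p | ∃ i, i < n ∧ i ∉ rangeM p}
  sol := fun p => {s | ∃ i, i < n ∧ i ∉ rangeM p ∧ s = constSeq i}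

def ACCfin (n : ℕ) : Problem where
  dom := {p | (∃ i, i < n ∧ i ∉ rangeM p) ∧ ({i | i < n} ∩ rangeM p).encard ≤ 1}
  sol := (Cfin n).sol

def CNat : Problem where
  dom := {p | ∃ i, i ∉ rangeM p}
  sol := fun p => {s | ∃ i, i ∉ rangeM p ∧ s = constSeq i}

/- differentiation -/
instance : Countable (AddMonoidAlgebra ℚ ℕ) :=
  Function.Injective.countable (f := AddMonoidAlgebra.coeff) (fun a b h => by cases a; cases b; cases h; rfl)

instance : Countable (Polynomial ℚ) :=
  Polynomial.toFinsupp_injective.countable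

noncomputable def polyEnum : ℕ → Polynomial ℚ :=
  (exists_surjective_nat (Polynomial ℚ)).choose

noncomputable def polyFun (k : ℕ) : C(Set.Icc (0:ℝ) 1, ℝ) :=
  ⟨fun x => ((polyEnum k).map (algebraMap ℚ ℝ)).eval (x : ℝ),
   (((polyEnum k).map (algebraMap ℚ ℝ)).continuous).comp continuous_subtype_val⟩

noncomputable def deltaC (p : Baire) (f : C(Set.Icc (0:ℝ) 1, ℝ)) : Prop :=
  ∀ n, ‖f - polyFun (p n)‖ ≤ (2 : ℝ) ^ (-(n : ℤ))

def IsDerivOn (f g : C(Set.Icc (0:ℝ) 1, ℝ)) : Prop :=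
  ∀ x : Set.Icc (0:ℝ) 1,
    HasDerivWithinAt (Set.IccExtend (by norm_num : (0:ℝ) ≤ 1) f) (g x) (Set.Icc 0 1) (x : ℝ)

noncomputable def diffP : Problem where
  dom := {p | ∃ f g, deltaC p f ∧ IsDerivOn f g}
  sol := fun p => {q | ∃ f g, deltaC p f ∧ IsDerivOn f g ∧ deltaC q g}
namespace WThm4

lemma pfst_pairB (p q : Baire) : pfst (pairB p q) = p := by
  funext n
  simp [pfst, pairB, Nat.mul_mod_right, Nat.mul_div_cancel_left _ (by norm_num : 0 < 2)]

lemma psnd_pairB (p q : Baire) : psnd (pairB p q) = q := by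
  funext n
  show pairB p q (2*n+1) = q n
  have h1 : ¬ ((2 * n + 1) % 2 = 0) := by omega
  have h2 : (2 * n + 1) / 2 = n := by omega
  rw [pairB, if_neg h1, h2]

lemma continuous_pfst : Continuous pfst :=
  continuous_pi fun n => continuous_apply _

lemma continuous_psnd : Continuous psnd :=
  continuous_pi fun n => continuous_apply _

/-- Locally determined functions are continuous on a set. -/
lemma contOn_of_locDet {H : Baire → Baire} {D : Set Baire}
    (h : ∀ r ∈ D, ∀ n, ∃ M, ∀ r', (∀ i, i < M → r' i = r i) → H r' n = H r n) :
    ContinuousOn H D := by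
  intro r hr
  rw [ContinuousWithinAt, tendsto_pi_nhds]
  intro n
  obtain ⟨M, hM⟩ := h r hr n
  have hU : {r' : Baire | ∀ i, i < M → r' i = r i} ∈ 𝓝 r := by
    have heq : {r' : Baire | ∀ i, i < M → r' i = r i}
        = ⋂ i ∈ Finset.range M, (fun r' : Baire => r' i) ⁻¹' {r i} := by
      ext r'; simp [Finset.mem_range]
    rw [heq]
    refine (Finset.range M).iInter_mem_sets.mpr fun i _ => ?_
    exact IsOpen.mem_nhds ((isOpen_discrete {r i}).preimage (continuous_apply i)) rfl
  refine Tendsto.congr' ?_ tendsto_const_nhds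
  filter_upwards [nhdsWithin_le_nhds hU] with r' hr'
  exact (hM r' hr').symm

lemma contOn_pairB {u v : Baire → Baire} {s : Set Baire}
    (hu : ContinuousOn u s) (hv : ContinuousOn v s) :
    ContinuousOn (fun r => pairB (u r) (v r)) s := by
  apply continuousOn_pi.mpr
  intro n
  by_cases h : n % 2 = 0
  · simp only [pairB, h, if_true]
    exact (continuous_apply (n/2)).comp_continuousOn hu
  · simp only [pairB, h, if_false]
    exact (continuous_apply (n/2)).comp_continuousOn hv

lemma WRed.trans {f g h : Problem} (h1 : WRed f g) (h2 : WRed g h) : WRed f h := by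
  obtain ⟨Kd1, Hd1, K1, H1, hK1, hH1, hred1⟩ := h1
  obtain ⟨Kd2, Hd2, K2, H2, hK2, hH2, hred2⟩ := h2
  refine ⟨Kd1 ∩ K1 ⁻¹' Kd2, {r : Baire | pfst r ∈ Kd1 ∧ pairB (K1 (pfst r)) (psnd r) ∈ Hd2 ∧
      pairB (pfst r) (H2 (pairB (K1 (pfst r)) (psnd r))) ∈ Hd1}, fun p => K2 (K1 p),
    fun r => H1 (pairB (pfst r) (H2 (pairB (K1 (pfst r)) (psnd r)))),
    ?_, ?_, ?_⟩
  · exact hK2.comp (hK1.mono Set.inter_subset_left) fun p hp => hp.2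
  pick_goal 2
  · intro p hp
    obtain ⟨hp1, hp2, hp3⟩ := hred1 p hp
    obtain ⟨hq1, hq2, hq3⟩ := hred2 (K1 p) hp2
    refine ⟨⟨hp1, hq1⟩, hq2, ?_⟩
    intro q hq
    obtain ⟨hA, hB⟩ := hq3 q hq
    obtain ⟨hC, hD⟩ := hp3 _ hB
    constructor
    · rw [Set.mem_setOf_eq, pfst_pairB, psnd_pairB]
      exact ⟨hp1, hA, hC⟩
    · show H1 _ ∈ _
      rw [pfst_pairB, psnd_pairB]
      exact hD
  · -- continuity of composed H on the set
    have hc1 : ContinuousOn (fun r => pairB (K1 (pfst r)) (psnd r))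
        {r : Baire | pfst r ∈ Kd1} :=
      contOn_pairB (hK1.comp continuous_pfst.continuousOn fun r hr => hr)
        (continuous_psnd.continuousOn.mono (Set.subset_univ _)
          |>.mono fun r hr => Set.mem_univ r)
    have hc2 : ContinuousOn (fun r => H2 (pairB (K1 (pfst r)) (psnd r)))
        {r : Baire | pfst r ∈ Kd1 ∧ pairB (K1 (pfst r)) (psnd r) ∈ Hd2} :=
      hH2.comp (hc1.mono fun r hr => hr.1) fun r hr => hr.2
    have hc3 : ContinuousOn (fun r => pairB (pfst r) (H2 (pairB (K1 (pfst r)) (psnd r))))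
        {r : Baire | pfst r ∈ Kd1 ∧ pairB (K1 (pfst r)) (psnd r) ∈ Hd2} :=
      contOn_pairB (continuous_pfst.continuousOn.mono fun r hr => Set.mem_univ r) hc2
    exact hH1.comp (hc3.mono fun r hr => ⟨hr.1, hr.2.1⟩) fun r hr => hr.2.2

end WThm4
namespace WThm4

lemma two_zpow_eq (n : ℕ) : (2:ℝ)^(-(n:ℤ)) = (1/2:ℝ)^n := by
  rw [zpow_neg, zpow_natCast, one_div, inv_pow]

/-- right inverse to ratEnum -/
def encodeRat (a : ℚ) : ℕ := Nat.pair a.num.toNat (Nat.pair (-a.num).toNat (a.den - 1))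

lemma ratEnum_encodeRat (a : ℚ) : ratEnum (encodeRat a) = a := by
  have hd : 1 ≤ a.den := a.pos
  rw [ratEnum, encodeRat, Nat.unpair_pair]
  simp only [Nat.unpair_pair]
  have h1 : ((a.num.toNat : ℚ)) - (((-a.num).toNat : ℚ)) = (a.num : ℚ) := by
    rcases le_or_gt 0 a.num with h | h
    · have e2 : (-a.num).toNat = 0 := by omega
      rw [e2, Nat.cast_zero, sub_zero]
      exact_mod_cast congrArg (fun z : ℤ => (z : ℚ)) (Int.toNat_of_nonneg h)
    · have e1 : a.num.toNat = 0 := by omega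
      rw [e1, Nat.cast_zero, zero_sub]
      have e3 : (((-a.num).toNat : ℤ) : ℚ) = ((-a.num : ℤ) : ℚ) :=
        congrArg (fun z : ℤ => (z : ℚ)) (Int.toNat_of_nonneg (by omega))
      push_cast at e3 ⊢
      rw [e3]; ring
  rw [h1]
  have h2 : ((a.den - 1 : ℕ) : ℚ) + 1 = (a.den : ℚ) := by
    have : (a.den - 1) + 1 = a.den := by omega
    rw [← this]; push_cast; ring
  rw [h2, Rat.num_div_den]

lemma ratEnum_surjective : Function.Surjective ratEnum :=
  fun a => ⟨encodeRat a, ratEnum_encodeRat a⟩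

/-- finite stage of rangeM -/
def Fset (p : Baire) (s : ℕ) : Finset ℕ :=
  (((Finset.range s).image p).erase 0).image (· - 1)

lemma mem_Fset {p : Baire} {s i : ℕ} : i ∈ Fset p s ↔ ∃ j < s, p j = i + 1 := by
  simp only [Fset, Finset.mem_image, Finset.mem_erase, Finset.mem_range]
  constructor
  · rintro ⟨m, ⟨hm0, j, hj, rfl⟩, rfl⟩
    exact ⟨j, hj, by omega⟩
  · rintro ⟨j, hj, hpj⟩
    exact ⟨i + 1, ⟨by omega, j, hj, hpj⟩, by omega⟩

lemma Fset_subset_rangeM {p : Baire} {s i : ℕ} (h : i ∈ Fset p s) : i ∈ rangeM p := by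
  obtain ⟨j, _, hj⟩ := mem_Fset.mp h
  exact ⟨j, hj⟩

lemma Fset_congr {p p' : Baire} {s : ℕ} (h : ∀ i, i < s → p' i = p i) :
    Fset p' s = Fset p s := by
  unfold Fset
  congr 1
  congr 1
  apply Finset.image_congr
  intro j hj
  exact h j (Finset.mem_range.mp (Finset.mem_coe.mp hj))

lemma chi_apply (A : Set ℕ) (n : ℕ) [Decidable (n ∈ A)] :
    chi A n = if n ∈ A then 1 else 0 := by
  rw [chi, Set.indicator_apply]

lemma rangeM_ifdef (c : ℕ → ℕ → Prop) [∀ a b, Decidable (c a b)] :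
    rangeM (fun j => if c j.unpair.1 j.unpair.2 then j.unpair.1 + 1 else 0)
      = {a | ∃ b, c a b} := by
  ext m
  constructor
  · rintro ⟨j, hj⟩
    dsimp only at hj
    by_cases h : c j.unpair.1 j.unpair.2
    · rw [if_pos h] at hj
      have : j.unpair.1 = m := by omega
      exact ⟨j.unpair.2, this ▸ h⟩
    · rw [if_neg h] at hj; omega
  · rintro ⟨b, hb⟩
    refine ⟨Nat.pair m b, ?_⟩
    dsimp only
    rw [Nat.unpair_pair]
    simp only [hb, if_pos]

lemma rhoNaive_unique {p : Baire} {x y : ℝ} (hx : rhoNaive p x) (hy : rhoNaive p y) :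
    x = y := tendsto_nhds_unique hx hy

lemma rhoLt_unique {p : Baire} {x y : ℝ} (hx : rhoLt p x) (hy : rhoLt p y) : x = y := by
  have key : ∀ u v : ℝ, {n | (ratEnum n : ℝ) < u} = {n | (ratEnum n : ℝ) < v} → ¬ u < v := by
    intro u v hs huv
    obtain ⟨a, ha1, ha2⟩ := exists_rat_btwn huv
    obtain ⟨k, hk⟩ := ratEnum_surjective a
    have : k ∈ {n | (ratEnum n : ℝ) < v} := by rw [Set.mem_setOf_eq, hk]; exact ha2
    rw [← hs, Set.mem_setOf_eq, hk] at this
    exact absurd ha1 (not_lt.mpr this.le)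
  have hs : {n | (ratEnum n : ℝ) < x} = {n | (ratEnum n : ℝ) < y} := by
    rw [← hx, ← hy]
  rcases lt_trichotomy x y with h | h | h
  · exact absurd h (key x y hs)
  · exact h
  · exact absurd h (key y x hs.symm)

lemma rhoCauchy_bound {q : Baire} {x : ℝ} (h : rhoCauchy q x) (n : ℕ) :
    |(ratEnum (q n) : ℝ) - x| ≤ (1/2:ℝ)^n := by
  rw [← two_zpow_eq]; exact h n

end WThm4
namespace WThm4

noncomputable def maxF (p : Baire) (s : ℕ) : ℚ :=
  if h : (Fset p s).Nonempty then ((Fset p s).image ratEnum).max' (h.image _) else 0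

noncomputable def Kconv (p : Baire) : Baire := fun s => encodeRat (maxF p s)

lemma tendsto_maxF {p : Baire} {x : ℝ} (h : rhoLt p x) :
    Tendsto (fun s => ((maxF p s : ℚ) : ℝ)) atTop (𝓝 x) := by
  rw [Metric.tendsto_atTop]
  intro ε hε
  obtain ⟨a, ha1, ha2⟩ := exists_rat_btwn (show x - ε < x by linarith)
  have hk : encodeRat a ∈ rangeM p := by
    rw [h, Set.mem_setOf_eq, ratEnum_encodeRat]; exact ha2
  obtain ⟨j, hj⟩ := hk
  refine ⟨j + 1, fun s hs => ?_⟩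
  have hmem : encodeRat a ∈ Fset p s := mem_Fset.mpr ⟨j, by omega, hj⟩
  have hne : (Fset p s).Nonempty := ⟨_, hmem⟩
  have hval : maxF p s = ((Fset p s).image ratEnum).max' (hne.image _) := dif_pos hne
  have hub : (maxF p s : ℝ) < x := by
    have := Finset.max'_mem ((Fset p s).image ratEnum) (hne.image _)
    rw [← hval] at this
    obtain ⟨k', hk', hval'⟩ := Finset.mem_image.mp this
    have : k' ∈ rangeM p := Fset_subset_rangeM hk'
    rw [h, Set.mem_setOf_eq] at this
    rw [← hval']
    exact this
  have hlb : (a : ℝ) ≤ (maxF p s : ℝ) := by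
    have h2 : a ≤ maxF p s := by
      rw [hval]
      calc a = ratEnum (encodeRat a) := (ratEnum_encodeRat a).symm
        _ ≤ _ := Finset.le_max' ((Fset p s).image ratEnum) (ratEnum (encodeRat a))
          (Finset.mem_image_of_mem _ hmem)
    exact_mod_cast h2
  rw [Real.dist_eq, abs_lt]
  constructor <;> linarith

lemma Kconv_naive {p : Baire} {x : ℝ} (h : rhoLt p x) : rhoNaive (Kconv p) x := by
  have : (fun n => ((ratEnum (Kconv p n) : ℚ) : ℝ)) = fun s => ((maxF p s : ℚ) : ℝ) := by
    funext s; rw [Kconv, ratEnum_encodeRat]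
  rw [rhoNaive, this]
  exact tendsto_maxF h

lemma contOn_Kconv (D : Set Baire) : ContinuousOn Kconv D := by
  apply contOn_of_locDet
  intro r _ n
  refine ⟨n, fun r' hr' => ?_⟩
  simp only [Kconv, maxF, Fset_congr hr']

/-- `(ρ< → d2) ≤ (ρ′ → d2)` -/
lemma red_lt_naive (d2 : Baire → ℝ → Prop) :
    WRed (implProblem rhoLt d2) (implProblem rhoNaive d2) := by
  refine ⟨{p | ∃ x, rhoLt p x}, Set.univ, Kconv, psnd,
    contOn_Kconv _, continuous_psnd.continuousOn, ?_⟩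
  rintro p ⟨x, hx⟩
  refine ⟨⟨x, hx⟩, ⟨x, Kconv_naive hx⟩, ?_⟩
  rintro q ⟨x', hx', hq⟩
  have : x' = x := rhoNaive_unique hx' (Kconv_naive hx)
  subst this
  exact ⟨trivial, by rw [psnd_pairB]; exact ⟨x', hx, hq⟩⟩

open Classical in
/-- `(ρ′ → ρ>) ≤ (ρ′ → ρ)` -/
lemma red_naiveGt_naiveCauchy :
    WRed (implProblem rhoNaive rhoGt) (implProblem rhoNaive rhoCauchy) := by
  refine ⟨{p | ∃ x, rhoNaive p x}, Set.univ, id,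
    fun r j => if ratEnum ((psnd r) j.unpair.2) + (1/2:ℚ)^(j.unpair.2) < ratEnum j.unpair.1
      then j.unpair.1 + 1 else 0,
    continuousOn_id, ?_, ?_⟩
  · apply contOn_of_locDet
    intro r _ n
    refine ⟨2 * n.unpair.2 + 2, fun r' hr' => ?_⟩
    have : psnd r' n.unpair.2 = psnd r n.unpair.2 := hr' _ (by omega)
    rw [this]
  · rintro p ⟨x, hx⟩
    refine ⟨⟨x, hx⟩, ⟨x, hx⟩, ?_⟩
    rintro q ⟨x', hx', hq⟩
    refine ⟨trivial, x', hx', ?_⟩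
    rw [rhoGt]
    simp only [psnd_pairB]
    rw [rangeM_ifdef (fun a b => ratEnum (q b) + (1/2:ℚ)^b < ratEnum a)]
    ext a
    simp only [Set.mem_setOf_eq]
    constructor
    · rintro ⟨b, hb⟩
      have hb' : ((ratEnum (q b) + (1/2:ℚ)^b : ℚ) : ℝ) < ((ratEnum a : ℚ) : ℝ) := by
        exact_mod_cast hb
      push_cast at hb'
      have := rhoCauchy_bound hq b
      rw [abs_le] at this
      linarith [this.2]
    · intro ha
      obtain ⟨b, hb⟩ := exists_pow_lt_of_lt_one (show (0:ℝ) < ((ratEnum a : ℝ) - x') / 2 by linarith)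
        (show (1/2:ℝ) < 1 by norm_num)
      refine ⟨b, ?_⟩
      have hc := rhoCauchy_bound hq b
      rw [abs_le] at hc
      have h3 : ((ratEnum (q b) + (1/2:ℚ)^b : ℚ) : ℝ) < ((ratEnum a : ℚ) : ℝ) := by
        push_cast
        linarith [hc.1]
      exact_mod_cast h3

end WThm4
namespace WThm4

lemma Fset_mono {p : Baire} {s t : ℕ} (h : s ≤ t) : Fset p s ⊆ Fset p t := by
  intro i hi
  obtain ⟨j, hj, hpj⟩ := mem_Fset.mp hi
  exact mem_Fset.mpr ⟨j, by omega, hpj⟩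

def Qsearch (r : Baire) (n m : ℕ) : Prop :=
  m.unpair.2.unpair.1 ∈ Fset (pfst r) m.unpair.1 ∧
  m.unpair.2.unpair.2 ∈ Fset (psnd r) m.unpair.1 ∧
  ratEnum m.unpair.2.unpair.2 - ratEnum m.unpair.2.unpair.1 ≤ (1/2:ℚ)^n

open Classical in
noncomputable def Hdc (r : Baire) : Baire := fun n =>
  if h : ∃ m, Qsearch r n m then (Nat.find h).unpair.2.unpair.1 else 0

lemma Qsearch_congr {r r' : Baire} {n m M : ℕ} (hm : 2 * m + 2 ≤ M)
    (hr' : ∀ i, i < M → r' i = r i) : (Qsearch r' n m ↔ Qsearch r n m) := by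
  have h1 : Fset (pfst r') m.unpair.1 = Fset (pfst r) m.unpair.1 := by
    apply Fset_congr
    intro i hi
    have := Nat.unpair_left_le m
    exact hr' (2 * i) (by omega)
  have h2 : Fset (psnd r') m.unpair.1 = Fset (psnd r) m.unpair.1 := by
    apply Fset_congr
    intro i hi
    have := Nat.unpair_left_le m
    exact hr' (2 * i + 1) (by omega)
  rw [Qsearch, Qsearch, h1, h2]

open Classical in
lemma contOn_Hdc : ContinuousOn Hdc {r | ∀ n, ∃ m, Qsearch r n m} := by
  apply contOn_of_locDet
  intro r hr n
  have h : ∃ m, Qsearch r n m := hr n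
  set m0 := Nat.find h with hm0
  refine ⟨2 * m0 + 2, fun r' hr' => ?_⟩
  have hiff : ∀ m, m ≤ m0 → (Qsearch r' n m ↔ Qsearch r n m) :=
    fun m hm => Qsearch_congr (by omega) hr'
  have h' : ∃ m, Qsearch r' n m := ⟨m0, (hiff m0 le_rfl).mpr (Nat.find_spec h)⟩
  have hfind : Nat.find h' = m0 := by
    rw [Nat.find_eq_iff]
    exact ⟨(hiff m0 le_rfl).mpr (Nat.find_spec h),
      fun m hm => fun hQ => Nat.find_min h hm ((hiff m (by omega)).mp hQ)⟩
  rw [Hdc, Hdc, dif_pos h', dif_pos h, hfind]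

open Classical in
/-- `(ρ< → ρ) ≤ (ρ< → ρ>)` -/
lemma red_ltCauchy_ltGt :
    WRed (implProblem rhoLt rhoCauchy) (implProblem rhoLt rhoGt) := by
  refine ⟨{p | ∃ x, rhoLt p x}, {r | ∀ n, ∃ m, Qsearch r n m}, id, Hdc,
    continuousOn_id, contOn_Hdc, ?_⟩
  rintro p ⟨x, hx⟩
  refine ⟨⟨x, hx⟩, ⟨x, hx⟩, ?_⟩
  rintro q ⟨x', hx', hq⟩
  have hxx : x' = x := rhoLt_unique hx' hx
  subst hxx
  set r := pairB p q with hr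
  have hmemHd : ∀ n, ∃ m, Qsearch r n m := by
    intro n
    have hpow : (0:ℝ) < (1/2:ℝ)^n / 2 := by positivity
    obtain ⟨u, hu1, hu2⟩ := exists_rat_btwn (show x' - (1/2:ℝ)^n/2 < x' by linarith)
    obtain ⟨v, hv1, hv2⟩ := exists_rat_btwn (show x' < x' + (1/2:ℝ)^n/2 by linarith)
    have hk : encodeRat u ∈ rangeM p := by
      rw [hx, Set.mem_setOf_eq, ratEnum_encodeRat]; exact hu2
    have hj : encodeRat v ∈ rangeM q := by
      rw [hq, Set.mem_setOf_eq, ratEnum_encodeRat]; exact hv1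
    obtain ⟨i1, hi1⟩ := hk
    obtain ⟨i2, hi2⟩ := hj
    refine ⟨Nat.pair (max i1 i2 + 1) (Nat.pair (encodeRat u) (encodeRat v)), ?_⟩
    rw [Qsearch, Nat.unpair_pair, Nat.unpair_pair]
    have e1 : pfst r = p := pfst_pairB p q
    have e2 : psnd r = q := psnd_pairB p q
    rw [e1, e2]
    refine ⟨mem_Fset.mpr ⟨i1, by omega, hi1⟩, mem_Fset.mpr ⟨i2, by omega, hi2⟩, ?_⟩
    rw [ratEnum_encodeRat, ratEnum_encodeRat]
    have : ((v - u : ℚ) : ℝ) ≤ (((1/2:ℚ)^n : ℚ) : ℝ) := by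
      push_cast
      linarith
    exact_mod_cast this
  refine ⟨hmemHd, x', hx, ?_⟩
  intro n
  have h : ∃ m, Qsearch r n m := hmemHd n
  have hspec := Nat.find_spec h
  obtain ⟨hk0, hj0, hdiff⟩ := hspec
  rw [pfst_pairB] at hk0
  rw [psnd_pairB] at hj0
  set k0 := (Nat.find h).unpair.2.unpair.1
  set j0 := (Nat.find h).unpair.2.unpair.2
  have hk0x : (ratEnum k0 : ℝ) < x' := by
    have := Fset_subset_rangeM hk0
    rw [hx, Set.mem_setOf_eq] at this; exact this
  have hj0x : x' < (ratEnum j0 : ℝ) := by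
    have := Fset_subset_rangeM hj0
    rw [hq, Set.mem_setOf_eq] at this; exact this
  have hdiff' : (ratEnum j0 : ℝ) - (ratEnum k0 : ℝ) ≤ (1/2:ℝ)^n := by
    have : ((ratEnum j0 - ratEnum k0 : ℚ) : ℝ) ≤ (((1/2:ℚ)^n : ℚ) : ℝ) := by exact_mod_cast hdiff
    push_cast at this
    linarith
  have hval : Hdc r n = k0 := by rw [Hdc, dif_pos h]
  rw [hval, two_zpow_eq, abs_le]
  constructor <;> linarith

end WThm4
namespace WThm4

open Classical in
lemma chi_eq_zero_iff {A : Set ℕ} {n : ℕ} : chi A n = 0 ↔ n ∉ A := by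
  rw [chi_apply]
  by_cases h : n ∈ A <;> simp [h]

/-- the condition enumerated by K for `(ρ′→ρ) ≤ EC` -/
def Cnc (p : Baire) (a t : ℕ) : Prop :=
  a.unpair.2 ≤ t ∧ (1/2:ℚ)^(a.unpair.1) < |ratEnum (p t) - ratEnum (p a.unpair.2)|

open Classical in
noncomputable def Knc (p : Baire) : Baire := fun j =>
  if Cnc p j.unpair.1 j.unpair.2 then j.unpair.1 + 1 else 0

open Classical in
noncomputable def Hnc (r : Baire) : Baire := fun n =>
  if h : ∃ s, (psnd r) (Nat.pair (n+1) s) = 0 then (pfst r) (Nat.find h) else 0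

lemma rangeM_Knc (p : Baire) : rangeM (Knc p) = {a | ∃ t, Cnc p a t} := by
  classical
  exact rangeM_ifdef (Cnc p)

open Classical in
lemma contOn_Knc (D : Set Baire) : ContinuousOn Knc D := by
  apply contOn_of_locDet
  intro p _ j
  refine ⟨j + 1, fun p' hp' => ?_⟩
  have h1 : p' j.unpair.2 = p j.unpair.2 := hp' _ (by have := Nat.unpair_right_le j; omega)
  have h2 : p' j.unpair.1.unpair.2 = p j.unpair.1.unpair.2 := by
    have := Nat.unpair_left_le j
    have := Nat.unpair_right_le j.unpair.1
    exact hp' _ (by omega)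
  have hC : Cnc p' j.unpair.1 j.unpair.2 ↔ Cnc p j.unpair.1 j.unpair.2 := by
    rw [Cnc, Cnc, h1, h2]
  simp only [Knc]
  by_cases hc : Cnc p j.unpair.1 j.unpair.2
  · rw [if_pos (hC.mpr hc), if_pos hc]
  · rw [if_neg (fun hx => hc (hC.mp hx)), if_neg hc]

open Classical in
lemma contOn_Hnc : ContinuousOn Hnc {r | ∀ n, ∃ s, (psnd r) (Nat.pair (n+1) s) = 0} := by
  apply contOn_of_locDet
  intro r hr n
  have h : ∃ s, (psnd r) (Nat.pair (n+1) s) = 0 := hr n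
  set s0 := Nat.find h with hs0
  set B := (Finset.range (s0+1)).sup (fun s' => Nat.pair (n+1) s') with hB
  refine ⟨2 * B + 2 * s0 + 2, fun r' hr' => ?_⟩
  have key : ∀ s', s' ≤ s0 → psnd r' (Nat.pair (n+1) s') = psnd r (Nat.pair (n+1) s') := by
    intro s' hs'
    have hle : Nat.pair (n+1) s' ≤ B :=
      Finset.le_sup (f := fun s' => Nat.pair (n+1) s') (Finset.mem_range.mpr (by omega))
    exact hr' _ (by omega)
  have h' : ∃ s, (psnd r') (Nat.pair (n+1) s) = 0 := ⟨s0, by rw [key s0 le_rfl]; exact Nat.find_spec h⟩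
  have hfind : Nat.find h' = s0 := by
    rw [Nat.find_eq_iff]
    refine ⟨by rw [key s0 le_rfl]; exact Nat.find_spec h, fun m hm hQ => ?_⟩
    exact Nat.find_min h hm (by rw [← key m (by omega)]; exact hQ)
  rw [Hnc, Hnc, dif_pos h', dif_pos h, hfind]
  exact hr' _ (by omega)

open Classical in
/-- `(ρ′ → ρ) ≤ EC` -/
lemma red_naiveCauchy_EC : WRed (implProblem rhoNaive rhoCauchy) EC := by
  refine ⟨{p | ∃ x, rhoNaive p x}, {r | ∀ n, ∃ s, (psnd r) (Nat.pair (n+1) s) = 0},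
    Knc, Hnc, contOn_Knc _, contOn_Hnc, ?_⟩
  rintro p ⟨x, hx⟩
  refine ⟨⟨x, hx⟩, trivial, ?_⟩
  intro q hq
  rw [EC, Set.mem_singleton_iff] at hq
  subst hq
  set S := rangeM (Knc p) with hS
  have hSdesc : S = {a | ∃ t, Cnc p a t} := rangeM_Knc p
  have hpsnd : psnd (pairB p (chi S)) = chi S := psnd_pairB _ _
  have hpfst : pfst (pairB p (chi S)) = p := pfst_pairB _ _
  -- key existence fact
  have hex : ∀ n, ∃ s, (chi S) (Nat.pair (n+1) s) = 0 := by
    intro n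
    have hpos : (0:ℝ) < (1/2:ℝ)^(n+1)/2 := by positivity
    obtain ⟨s0, hs0⟩ := (Metric.tendsto_atTop.mp hx) _ hpos
    refine ⟨s0, chi_eq_zero_iff.mpr ?_⟩
    rw [hSdesc, Set.mem_setOf_eq]
    rintro ⟨t, ht1, ht2⟩
    rw [Nat.unpair_pair] at ht1 ht2
    have d1 := hs0 t ht1
    have d2 := hs0 s0 le_rfl
    rw [Real.dist_eq] at d1 d2
    have habs : |(ratEnum (p t) : ℝ) - (ratEnum (p s0) : ℝ)| < (1/2:ℝ)^(n+1) := by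
      have htri : |(ratEnum (p t) : ℝ) - (ratEnum (p s0) : ℝ)|
          ≤ |(ratEnum (p t) : ℝ) - x| + |(ratEnum (p s0) : ℝ) - x| := by
        rw [show (ratEnum (p t) : ℝ) - (ratEnum (p s0) : ℝ)
          = ((ratEnum (p t) : ℝ) - x) - ((ratEnum (p s0) : ℝ) - x) by ring]
        exact abs_sub _ _
      linarith
    have hcast : ((|ratEnum (p t) - ratEnum (p s0)| : ℚ) : ℝ) < (((1/2:ℚ)^(n+1) : ℚ) : ℝ) := by
      push_cast
      exact habs
    have := (Rat.cast_lt (K := ℝ)).mp hcast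
    linarith
  refine ⟨by rw [Set.mem_setOf_eq, hpsnd]; exact hex, x, hx, ?_⟩
  -- verify the Cauchy condition
  intro n
  have h : ∃ s, chi S (Nat.pair (n+1) s) = 0 := hex n
  set s1 := Nat.find h with hs1
  have hval : Hnc (pairB p (chi S)) n = p s1 := by
    simp only [Hnc, hpsnd, hpfst]
    rw [dif_pos h]
  have hzero : chi S (Nat.pair (n+1) s1) = 0 := Nat.find_spec h
  have hnotmem : Nat.pair (n+1) s1 ∉ S := chi_eq_zero_iff.mp hzero
  rw [hSdesc, Set.mem_setOf_eq] at hnotmem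
  push_neg at hnotmem
  have hbd : ∀ t, s1 ≤ t → |(ratEnum (p t) : ℝ) - (ratEnum (p s1) : ℝ)| ≤ (1/2:ℝ)^(n+1) := by
    intro t ht
    have := hnotmem t
    rw [Cnc, Nat.unpair_pair] at this
    simp only [not_and, not_lt] at this
    have h2 := this ht
    have : ((|ratEnum (p t) - ratEnum (p s1)| : ℚ) : ℝ) ≤ (((1/2:ℚ)^(n+1) : ℚ) : ℝ) :=
      (Rat.cast_le (K := ℝ)).mpr h2
    push_cast at this
    exact this
  have hlim : |x - (ratEnum (p s1) : ℝ)| ≤ (1/2:ℝ)^(n+1) := by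
    have htend : Tendsto (fun t => |(ratEnum (p t) : ℝ) - (ratEnum (p s1) : ℝ)|) atTop
        (𝓝 |x - (ratEnum (p s1) : ℝ)|) := ((hx.sub_const _).abs)
    exact le_of_tendsto htend (Filter.eventually_atTop.mpr ⟨s1, hbd⟩)
  rw [hval, two_zpow_eq, abs_sub_comm]
  calc |x - (ratEnum (p s1) : ℝ)| ≤ (1/2:ℝ)^(n+1) := hlim
    _ ≤ (1/2:ℝ)^n := pow_le_pow_of_le_one (by norm_num) (by norm_num) (by omega)

end WThm4
namespace WThm4
open Classical

noncomputable def gfun (A : Set ℕ) : ℕ → ℝ := fun i => if i ∈ A then (1/4:ℝ)^(i+1) else 0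

lemma gfun_nonneg (A : Set ℕ) (i : ℕ) : 0 ≤ gfun A i := by
  rw [gfun]; split <;> positivity

lemma gfun_le (A : Set ℕ) (i : ℕ) : gfun A i ≤ (1/4:ℝ)^(i+1) := by
  rw [gfun]; split
  · exact le_refl _
  · positivity

lemma summable_quarter : Summable (fun i : ℕ => (1/4:ℝ)^(i+1)) := by
  have h : Summable (fun i : ℕ => (1/4:ℝ) * (1/4:ℝ)^i) :=
    (summable_geometric_of_lt_one (by norm_num) (by norm_num)).mul_left _
  refine h.congr fun i => ?_
  rw [pow_succ']

lemma tsum_quarter : ∑' i : ℕ, (1/4:ℝ)^(i+1) = 1/3 := by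
  have h : ∀ i : ℕ, (1/4:ℝ)^(i+1) = (1/4:ℝ) * (1/4:ℝ)^i := fun i => pow_succ' _ _
  rw [tsum_congr h, tsum_mul_left, tsum_geometric_of_lt_one (by norm_num) (by norm_num)]
  norm_num

lemma summable_gfun (A : Set ℕ) : Summable (gfun A) :=
  Summable.of_nonneg_of_le (gfun_nonneg A) (gfun_le A) summable_quarter

lemma four_quarter_cancel (m : ℕ) : (4:ℝ)^m * (1/4:ℝ)^m = 1 := by
  rw [← mul_pow]; norm_num

noncomputable def xr (p : Baire) : ℝ := ∑' i, gfun (rangeM p) i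

noncomputable def xq (p : Baire) (s : ℕ) : ℚ := ∑ i ∈ Fset p s, (1/4:ℚ)^(i+1)

lemma xq_cast (p : Baire) (s : ℕ) :
    ((xq p s : ℚ) : ℝ) = ∑ i ∈ Fset p s, gfun (rangeM p) i := by
  rw [xq]
  push_cast
  refine Finset.sum_congr rfl fun i hi => ?_
  rw [gfun, if_pos (Fset_subset_rangeM hi)]

lemma xq_le_xr (p : Baire) (s : ℕ) : ((xq p s : ℚ) : ℝ) ≤ xr p := by
  rw [xq_cast]
  exact Summable.sum_le_tsum _ (fun i _ => gfun_nonneg _ i) (summable_gfun _)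

lemma tendsto_xq (p : Baire) :
    Tendsto (fun s => ((xq p s : ℚ) : ℝ)) atTop (𝓝 (xr p)) := by
  have hsum := (summable_gfun (rangeM p)).hasSum
  rw [Metric.tendsto_atTop]
  intro ε hε
  have hev := Metric.tendsto_nhds.mp hsum ε hε
  rw [SummationFilter.unconditional_filter, Filter.eventually_atTop] at hev
  obtain ⟨G0, hG0⟩ := hev
  refine ⟨G0.sup (fun i => if h : i ∈ rangeM p then Nat.find h + 1 else 0), fun s hs => ?_⟩
  have hsub : ∀ i ∈ G0, i ∈ rangeM p → i ∈ Fset p s := by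
    intro i hi hiA
    have hle := le_trans
      (Finset.le_sup (f := fun i => if h : i ∈ rangeM p then Nat.find h + 1 else 0) hi) hs
    rw [dif_pos hiA] at hle
    exact mem_Fset.mpr ⟨Nat.find hiA, by omega, Nat.find_spec hiA⟩
  have hunion := hG0 (Fset p s ∪ G0) Finset.subset_union_right
  have heq : ∑ i ∈ Fset p s ∪ G0, gfun (rangeM p) i = ∑ i ∈ Fset p s, gfun (rangeM p) i := by
    symm
    apply Finset.sum_subset Finset.subset_union_left
    intro i hi hnot
    rcases Finset.mem_union.mp hi with h | h
    · exact absurd h hnot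
    · rw [gfun]
      split
      · exact absurd (hsub i h (by assumption)) hnot
      · rfl
  rw [xq_cast]
  rw [heq] at hunion
  exact hunion

noncomputable def Kec (p : Baire) : Baire := fun j =>
  if ratEnum j.unpair.1 < xq p j.unpair.2 then j.unpair.1 + 1 else 0

lemma rhoLt_Kec (p : Baire) : rhoLt (Kec p) (xr p) := by
  have hre : rangeM (Kec p) = {a | ∃ b, ratEnum a < xq p b} :=
    rangeM_ifdef (fun a b => ratEnum a < xq p b)
  rw [rhoLt, hre]
  ext a
  simp only [Set.mem_setOf_eq]
  constructor
  · rintro ⟨b, hb⟩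
    have hcast : ((ratEnum a : ℚ) : ℝ) < ((xq p b : ℚ) : ℝ) := by exact_mod_cast hb
    exact lt_of_lt_of_le hcast (xq_le_xr p b)
  · intro ha
    obtain ⟨s, hsval⟩ := Metric.tendsto_atTop.mp (tendsto_xq p) (xr p - (ratEnum a : ℝ))
      (by linarith)
    have h2 := hsval s le_rfl
    rw [Real.dist_eq, abs_lt] at h2
    refine ⟨s, ?_⟩
    have hcast : ((ratEnum a : ℚ) : ℝ) < ((xq p s : ℚ) : ℝ) := by linarith [h2.1]
    exact_mod_cast hcast

lemma contOn_Kec (D : Set Baire) : ContinuousOn Kec D := by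
  apply contOn_of_locDet
  intro p _ j
  refine ⟨j + 1, fun p' hp' => ?_⟩
  have hx : xq p' j.unpair.2 = xq p j.unpair.2 := by
    rw [xq, xq, Fset_congr (fun i hi => hp' i (by have := Nat.unpair_right_le j; omega))]
  simp only [Kec, hx]

noncomputable def Hec (r : Baire) : Baire := fun n =>
  ((⌊(4:ℚ)^(n+1) * ratEnum ((psnd r) (2*n+4)) + 1/4⌋) % 2).toNat

lemma contOn_Hec (D : Set Baire) : ContinuousOn Hec D := by
  apply contOn_of_locDet
  intro r _ n
  refine ⟨2 * (2*n+4) + 2, fun r' hr' => ?_⟩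
  have h1 : psnd r' (2*n+4) = psnd r (2*n+4) := hr' _ (by omega)
  simp only [Hec, h1]

noncomputable def Ndig (A : Set ℕ) (n : ℕ) : ℕ :=
  ∑ i ∈ Finset.range (n+1), (if i ∈ A then 4^(n-i) else 0)

lemma Ndig_mod (A : Set ℕ) (n : ℕ) : Ndig A n % 2 = (if n ∈ A then 1 else 0) := by
  rw [Ndig, Finset.sum_range_succ]
  have hdvd : 2 ∣ ∑ i ∈ Finset.range n, (if i ∈ A then 4^(n-i) else 0) := by
    apply Finset.dvd_sum
    intro i hi
    split
    · have hne : n - i ≠ 0 := by have := Finset.mem_range.mp hi; omega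
      exact dvd_trans (by norm_num) (dvd_pow_self 4 hne)
    · exact dvd_zero 2
  obtain ⟨c, hc⟩ := hdvd
  rw [hc]
  have hz : n - n = 0 := by omega
  rw [hz, pow_zero]
  split <;> omega

lemma xr_bounds (p : Baire) (n : ℕ) :
    ((Ndig (rangeM p) n : ℕ) : ℝ) ≤ 4^(n+1) * xr p ∧
      4^(n+1) * xr p ≤ ((Ndig (rangeM p) n : ℕ) : ℝ) + 1/3 := by
  set A := rangeM p with hA
  set f : ℕ → ℝ := fun i => (4:ℝ)^(n+1) * gfun A i with hf
  have hsf : Summable f := (summable_gfun A).mul_left _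
  have hxr : 4^(n+1) * xr p = ∑' i, f i := by
    rw [xr, ← tsum_mul_left]
  have hsplit : ∑' i, f i = ∑ i ∈ Finset.range (n+1), f i + ∑' i, f (i + (n+1)) :=
    (Summable.sum_add_tsum_nat_add (f := f) (n+1) hsf).symm
  have hhead : ∑ i ∈ Finset.range (n+1), f i = ((Ndig A n : ℕ) : ℝ) := by
    rw [Ndig]
    push_cast
    refine Finset.sum_congr rfl fun i hi => ?_
    have hin : i ≤ n := by have := Finset.mem_range.mp hi; omega
    simp only [hf, gfun]
    by_cases hiA : i ∈ A
    · rw [if_pos hiA, if_pos hiA]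
      rw [show n+1 = (n-i)+(i+1) by omega, pow_add, mul_assoc, four_quarter_cancel, mul_one]
    · rw [if_neg hiA, if_neg hiA, mul_zero]
  have htail0 : 0 ≤ ∑' i, f (i + (n+1)) :=
    tsum_nonneg fun i => mul_nonneg (by positivity) (gfun_nonneg A _)
  have htail : ∑' i, f (i + (n+1)) ≤ 1/3 := by
    have hs' : Summable fun i => f (i + (n+1)) := (summable_nat_add_iff (n+1)).mpr hsf
    have hle : ∀ i, f (i + (n+1)) ≤ (1/4:ℝ)^(i+1) := by
      intro i
      simp only [hf, gfun]
      by_cases hiA : i + (n+1) ∈ A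
      · rw [if_pos hiA]
        have h1 : (1/4:ℝ)^((n+1)+(i+1)) = (1/4:ℝ)^(n+1) * (1/4:ℝ)^(i+1) := pow_add _ _ _
        rw [show i + (n+1) + 1 = (n+1)+(i+1) by omega, h1, ← mul_assoc,
          four_quarter_cancel, one_mul]
      · rw [if_neg hiA, mul_zero]; positivity
    calc ∑' i, f (i + (n+1)) ≤ ∑' i : ℕ, (1/4:ℝ)^(i+1) := Summable.tsum_le_tsum hle hs' summable_quarter
      _ = 1/3 := tsum_quarter
  constructor
  · rw [hxr, hsplit, hhead]; linarith
  · rw [hxr, hsplit, hhead]; linarith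

lemma floor_eq_Ndig {p : Baire} {n : ℕ} {a : ℚ} (ha : |(a:ℝ) - xr p| ≤ (1/4:ℝ)^(n+2)) :
    ⌊(4:ℚ)^(n+1) * a + 1/4⌋ = (Ndig (rangeM p) n : ℤ) := by
  obtain ⟨hb1, hb2⟩ := xr_bounds p n
  rw [← Rat.floor_cast (α := ℝ)]
  rw [Int.floor_eq_iff]
  have hcast : (((4:ℚ)^(n+1) * a + 1/4 : ℚ) : ℝ) = (4:ℝ)^(n+1) * (a:ℝ) + 1/4 := by push_cast; ring
  rw [hcast]
  rw [abs_le] at ha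
  have hp4 : (0:ℝ) ≤ (4:ℝ)^(n+1) := by positivity
  have hkey : (4:ℝ)^(n+1) * (1/4:ℝ)^(n+2) = 1/4 := by
    have h1 : (1/4:ℝ)^(n+2) = (1/4:ℝ)^(n+1) * (1/4:ℝ) := pow_succ _ _
    rw [h1, ← mul_assoc, four_quarter_cancel, one_mul]
  have hub : (4:ℝ)^(n+1) * ((a:ℝ) - xr p) ≤ 1/4 := by
    calc (4:ℝ)^(n+1) * ((a:ℝ) - xr p) ≤ (4:ℝ)^(n+1) * (1/4:ℝ)^(n+2) :=
          mul_le_mul_of_nonneg_left ha.2 hp4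
      _ = 1/4 := hkey
  have hlb : -(1/4:ℝ) ≤ (4:ℝ)^(n+1) * ((a:ℝ) - xr p) := by
    have h5 := mul_le_mul_of_nonneg_left ha.1 hp4
    rw [mul_neg, hkey] at h5
    exact h5
  have hexp : (4:ℝ)^(n+1) * (a:ℝ) = (4:ℝ)^(n+1) * xr p + (4:ℝ)^(n+1) * ((a:ℝ) - xr p) := by ring
  constructor
  · push_cast
    rw [hexp]
    linarith
  · push_cast
    rw [hexp]
    linarith

/-- `EC ≤ (ρ< → ρ)` -/
lemma red_EC_ltCauchy : WRed EC (implProblem rhoLt rhoCauchy) := by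
  refine ⟨Set.univ, Set.univ, Kec, Hec, contOn_Kec _, contOn_Hec _, ?_⟩
  intro p _
  refine ⟨trivial, ⟨xr p, rhoLt_Kec p⟩, ?_⟩
  rintro q ⟨x', hx', hq⟩
  have hxx : x' = xr p := rhoLt_unique hx' (rhoLt_Kec p)
  subst hxx
  refine ⟨trivial, ?_⟩
  rw [EC, Set.mem_singleton_iff]
  funext n
  have hq' := rhoCauchy_bound hq (2*n+4)
  have hquarter : ((1/2:ℝ))^(2*n+4) = (1/4:ℝ)^(n+2) := by
    rw [show 2*n+4 = 2*(n+2) by omega, pow_mul]; norm_num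
  have ha : |(ratEnum (q (2*n+4)) : ℝ) - xr p| ≤ (1/4:ℝ)^(n+2) := by
    rw [← hquarter]; exact hq'
  have hfloor := floor_eq_Ndig (p := p) (n := n) ha
  show ((⌊(4:ℚ)^(n+1) * ratEnum ((psnd (pairB p q)) (2*n+4)) + 1/4⌋) % 2).toNat
    = chi (rangeM p) n
  rw [psnd_pairB, hfloor, chi_apply]
  have hmod := Ndig_mod (rangeM p) n
  by_cases hmem : n ∈ rangeM p
  · rw [if_pos hmem] at hmod ⊢; omega
  · rw [if_neg hmem] at hmod ⊢; omega

end WThm4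

/-- Weihrauch's Theorem 4: `EC ≡_W (ρ′→ρ) ≡_W (ρ′→ρ_>) ≡_W (ρ_<→ρ_>) ≡_W (ρ_<→ρ)`
(continuous Weihrauch equivalence). -/
theorem EC_equiv_translators :
    WEquiv EC (implProblem rhoNaive rhoCauchy) ∧
    WEquiv (implProblem rhoNaive rhoCauchy) (implProblem rhoNaive rhoGt) ∧
    WEquiv (implProblem rhoNaive rhoGt) (implProblem rhoLt rhoGt) ∧
    WEquiv (implProblem rhoLt rhoGt) (implProblem rhoLt rhoCauchy) := by
  have hDC := WThm4.red_ltCauchy_ltGt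
  have hCB := WThm4.red_lt_naive rhoGt
  have hBA := WThm4.red_naiveGt_naiveCauchy
  have hAE := WThm4.red_naiveCauchy_EC
  have hED := WThm4.red_EC_ltCauchy
  have hDA := WThm4.red_lt_naive rhoCauchy
  have T := @WThm4.WRed.trans
  exact ⟨⟨T hED hDA, hAE⟩,
    ⟨T hAE (T hED (T hDC hCB)), hBA⟩,
    ⟨T hBA (T hAE (T hED hDC)), hCB⟩,
    ⟨T hCB (T hBA (T hAE hED)), hDC⟩⟩
end

section
/- EC ≡_W d: the problem EC is continuously Weihrauch equivalent to the operator of differentiation d :⊆ C[0,1] → C[0,1], f ↦ f′, restricted to continuously differentiable functions. -/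
open Filter Topology

/-! ### Shared infrastructure -/

section Infra

open Set

/-- A `ℕ`-valued function on Baire space depending on finitely many coordinates is continuous. -/
lemma continuous_of_finite_dep {s : ℕ} (F : Baire → ℕ)
    (h : ∀ p q : Baire, (∀ i < s, p i = q i) → F p = F q) : Continuous F := by
  have : F = (fun v : Fin s → ℕ => F (fun i => if h : i < s then v ⟨i, h⟩ else 0)) ∘
      (fun p : Baire => (fun i : Fin s => p i)) := by
    funext p
    exact h _ _ (fun i hi => by simp [hi])
  rw [this]
  exact (continuous_of_discreteTopology).comp (continuous_pi fun i => continuous_apply _)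

lemma psnd_pairB (p q : Baire) : psnd (pairB p q) = q := by
  funext k
  have h1 : (2 * k + 1) % 2 = 1 := by omega
  have h2 : (2 * k + 1) / 2 = k := by omega
  simp [psnd, pairB, h1, h2]

lemma pfst_pairB (p q : Baire) : pfst (pairB p q) = p := by
  funext k
  simp [pfst, pairB, Nat.mul_mod_right, Nat.mul_div_cancel_left _ (by norm_num : (0:ℕ) < 2)]

lemma chi_apply_mem {A : Set ℕ} {n : ℕ} (h : n ∈ A) : chi A n = 1 := by
  simp [chi, Set.indicator_of_mem h]

lemma chi_apply_not_mem {A : Set ℕ} {n : ℕ} (h : n ∉ A) : chi A n = 0 := by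
  simp [chi, Set.indicator_of_notMem h]

lemma polyEnum_surjective : Function.Surjective polyEnum :=
  (exists_surjective_nat (Polynomial ℚ)).choose_spec

lemma polyFun_apply (k : ℕ) (x : Set.Icc (0:ℝ) 1) :
    polyFun k x = ((polyEnum k).map (algebraMap ℚ ℝ)).eval (x : ℝ) := rfl

/-- Rational polynomials are dense in `C[0,1]`. -/
lemma exists_polyFun_near (f : C(Set.Icc (0:ℝ) 1, ℝ)) {ε : ℝ} (hε : 0 < ε) :
    ∃ j, ‖f - polyFun j‖ ≤ ε := by
  -- first, a real polynomial within ε/2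
  have hd : f ∈ (polynomialFunctions (Set.Icc (0:ℝ) 1)).topologicalClosure := by
    rw [polynomialFunctions_closure_eq_top]; trivial
  have hd' : f ∈ closure ((polynomialFunctions (Set.Icc (0:ℝ) 1)) : Set C(Set.Icc (0:ℝ) 1, ℝ)) := by
    rw [← Subalgebra.topologicalClosure_coe]; exact hd
  rw [Metric.mem_closure_iff] at hd'
  obtain ⟨g, hgm, hgd⟩ := hd' (ε/2) (by positivity)
  rw [polynomialFunctions_coe] at hgm
  obtain ⟨P, hP⟩ := hgm
  -- now round coefficients of P to rationals
  set d := P.natDegree with hd0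
  have hrat : ∀ k : ℕ, ∃ q : ℚ, |P.coeff k - (q:ℝ)| < ε / (4 * (d+1)) := by
    intro k; exact exists_rat_near _ (by positivity)
  choose c hc using hrat
  set Q : Polynomial ℚ := ∑ k ∈ Finset.range (d+1), Polynomial.C (c k) * Polynomial.X ^ k with hQ
  obtain ⟨j, hj⟩ := polyEnum_surjective Q
  refine ⟨j, ?_⟩
  have hQR : ∀ x : Set.Icc (0:ℝ) 1, polyFun j x =
      ∑ k ∈ Finset.range (d+1), ((c k : ℝ) * (x:ℝ) ^ k) := by
    intro x
    rw [polyFun_apply, hj, hQ]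
    simp [Polynomial.eval_finset_sum]
  have hPx : ∀ x : Set.Icc (0:ℝ) 1, P.eval (x:ℝ) =
      ∑ k ∈ Finset.range (d+1), (P.coeff k * (x:ℝ) ^ k) := by
    intro x; exact P.eval_eq_sum_range (x:ℝ)
  have hclose : ∀ x : Set.Icc (0:ℝ) 1, |P.eval (x:ℝ) - polyFun j x| ≤ ε/2 := by
    intro x
    rw [hQR, hPx, ← Finset.sum_sub_distrib]
    calc |∑ k ∈ Finset.range (d+1), (P.coeff k * (x:ℝ)^k - (c k : ℝ) * (x:ℝ)^k)|
        ≤ ∑ k ∈ Finset.range (d+1), |P.coeff k * (x:ℝ)^k - (c k : ℝ) * (x:ℝ)^k| :=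
          Finset.abs_sum_le_sum_abs _ _
      _ ≤ ∑ k ∈ Finset.range (d+1), ε / (4 * (d+1)) := by
          refine Finset.sum_le_sum fun k _ => ?_
          rw [← sub_mul, abs_mul]
          have hx : |(x:ℝ)| ≤ 1 := by
            rw [abs_le]; constructor
            · linarith [x.2.1]
            · exact x.2.2
          have hxk : |(x:ℝ) ^ k| ≤ 1 := by
            rw [abs_pow]; exact pow_le_one₀ (abs_nonneg _) hx
          calc |P.coeff k - (c k : ℝ)| * |(x:ℝ)^k| ≤ |P.coeff k - (c k : ℝ)| * 1 :=
                mul_le_mul_of_nonneg_left hxk (abs_nonneg _)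
            _ ≤ ε / (4 * (d+1)) := by rw [mul_one]; exact (hc k).le
      _ = (d+1) * (ε / (4*(d+1))) := by rw [Finset.sum_const, Finset.card_range]; ring
      _ ≤ ε/2 := by
          have h4 : ((d:ℝ)+1) * (ε/(4*((d:ℝ)+1))) = ε/4 := by
            field_simp
          rw [h4]; linarith
  have hgf : ∀ x : Set.Icc (0:ℝ) 1, g x = P.eval (x:ℝ) := by
    intro x; rw [← hP]; rfl
  rw [← dist_eq_norm]
  have : ∀ x : Set.Icc (0:ℝ) 1, dist (f x) (polyFun j x) ≤ ε/2 + ε/2 := by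
    intro x
    calc dist (f x) (polyFun j x) ≤ dist (f x) (g x) + dist (g x) (polyFun j x) := dist_triangle _ _ _
      _ ≤ ε/2 + ε/2 := by
          refine add_le_add ?_ ?_
          · exact le_trans (ContinuousMap.dist_apply_le_dist x) hgd.le
          · rw [hgf, Real.dist_eq]; exact hclose x
  calc dist f (polyFun j) ≤ ε/2 + ε/2 := ContinuousMap.dist_le (by positivity) |>.2 this
    _ = ε := by ring

end Infra
section Unique

open Set

lemma two_zpow_neg_nat (n : ℕ) : (2:ℝ) ^ (-(n:ℤ)) = (2:ℝ)⁻¹ ^ n := by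
  rw [zpow_neg, ← inv_zpow, zpow_natCast]

lemma two_zpow_pos (n : ℕ) : (0:ℝ) < (2:ℝ) ^ (-(n:ℤ)) := by positivity

lemma deltaC_unique {p : Baire} {f f' : C(Set.Icc (0:ℝ) 1, ℝ)}
    (h : deltaC p f) (h' : deltaC p f') : f = f' := by
  have key : ∀ n : ℕ, ‖f - f'‖ ≤ 2 * 2 ^ (-(n:ℤ)) := by
    intro n
    calc ‖f - f'‖ = ‖(f - polyFun (p n)) - (f' - polyFun (p n))‖ := by ring_nf
      _ ≤ ‖f - polyFun (p n)‖ + ‖f' - polyFun (p n)‖ := norm_sub_le _ _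
      _ ≤ 2 ^ (-(n:ℤ)) + 2 ^ (-(n:ℤ)) := add_le_add (h n) (h' n)
      _ = 2 * 2 ^ (-(n:ℤ)) := by ring
  have hlim : Tendsto (fun n : ℕ => 2 * (2:ℝ) ^ (-(n:ℤ))) atTop (nhds 0) := by
    have : Tendsto (fun n : ℕ => ((2:ℝ)⁻¹) ^ n) atTop (nhds 0) :=
      tendsto_pow_atTop_nhds_zero_of_lt_one (by norm_num) (by norm_num)
    simpa [two_zpow_neg_nat] using this.const_mul 2
  have : ‖f - f'‖ ≤ 0 := ge_of_tendsto hlim (Filter.Eventually.of_forall key)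
  have : f - f' = 0 := by
    rwa [← norm_le_zero_iff]
  exact sub_eq_zero.mp this

lemma isDerivOn_unique {f g g' : C(Set.Icc (0:ℝ) 1, ℝ)}
    (h : IsDerivOn f g) (h' : IsDerivOn f g') : g = g' := by
  ext x
  have hu : UniqueDiffWithinAt ℝ (Set.Icc (0:ℝ) 1) (x:ℝ) :=
    uniqueDiffOn_Icc_zero_one (x:ℝ) x.2
  exact hu.eq_deriv _ (h x) (h' x)

lemma deltaC_eval_close {q : Baire} {g : C(Set.Icc (0:ℝ) 1, ℝ)} (h : deltaC q g)
    (m : ℕ) (x : Set.Icc (0:ℝ) 1) : |g x - polyFun (q m) x| ≤ (2:ℝ) ^ (-(m:ℤ)) := by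
  have := (g - polyFun (q m)).norm_coe_le_norm x
  rw [ContinuousMap.sub_apply] at this
  calc |g x - polyFun (q m) x| = ‖g x - polyFun (q m) x‖ := rfl
    _ ≤ ‖g - polyFun (q m)‖ := this
    _ ≤ _ := h m

end Unique
/-! ### Direction 1: dyadics, triangle bumps, primitives -/

noncomputable section Dir1

open Set intervalIntegral

def tp (n : ℕ) : ℝ := (2:ℝ) ^ (-(n:ℤ))

lemma tp_pos (n : ℕ) : 0 < tp n := by unfold tp; positivity

lemma tp_eq (n : ℕ) : tp n = (2:ℝ)⁻¹ ^ n := two_zpow_neg_nat n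

lemma tp_le_one (n : ℕ) : tp n ≤ 1 := by
  rw [tp_eq]; exact pow_le_one₀ (by norm_num) (by norm_num)

lemma tp_add (m n : ℕ) : tp (m + n) = tp m * tp n := by
  unfold tp
  rw [← zpow_add₀ (by norm_num : (2:ℝ) ≠ 0)]
  congr 1
  push_cast; ring

lemma tp_succ (n : ℕ) : tp (n + 1) = tp n / 2 := by
  rw [tp_add]; unfold tp; norm_num; ring

lemma tp_antitone {m n : ℕ} (h : m ≤ n) : tp n ≤ tp m := by
  rw [tp_eq, tp_eq]
  exact pow_le_pow_of_le_one (by norm_num) (by norm_num) h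

lemma summable_tp : Summable tp := by
  have h : tp = fun n => (2:ℝ)⁻¹ ^ n := funext tp_eq
  rw [h]
  exact summable_geometric_of_lt_one (by norm_num) (by norm_num)

lemma tsum_tp : ∑' n, tp n = 2 := by
  simp_rw [tp_eq]
  rw [tsum_geometric_of_lt_one (by norm_num) (by norm_num)]
  norm_num

/-- Triangle bump. -/
def tri (c w x : ℝ) : ℝ := max 0 (1 - |x - c| / w)

lemma tri_nonneg (c w x : ℝ) : 0 ≤ tri c w x := le_max_left _ _

lemma tri_le_one {c w : ℝ} (hw : 0 < w) (x : ℝ) : tri c w x ≤ 1 := by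
  apply max_le (by norm_num)
  have : 0 ≤ |x - c| / w := by positivity
  linarith

lemma tri_center (c : ℝ) {w : ℝ} (hw : 0 < w) : tri c w c = 1 := by
  unfold tri
  rw [sub_self, abs_zero, zero_div, sub_zero]
  exact max_eq_right zero_le_one

lemma tri_zero_of_far {c w x : ℝ} (hw : 0 < w) (h : w ≤ |x - c|) : tri c w x = 0 := by
  apply max_eq_left
  rw [sub_nonpos, le_div_iff₀ hw, one_mul]
  exact h

lemma tri_continuous (c w : ℝ) : Continuous (tri c w) := by
  apply Continuous.max continuous_const
  exact (continuous_const.sub (((continuous_id.sub continuous_const).abs).div_const w))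

/-- The primitive of a `[0,1]`-valued function vanishing outside `[a,b] ⊆ [0,∞)`
is bounded by `b - a`, and nonnegative. -/
lemma primitive_bounds {T : ℝ → ℝ} (hc : Continuous T) {a b : ℝ}
    (h0 : 0 ≤ a) (hab : a ≤ b) (hT0 : ∀ x, 0 ≤ T x) (hT1 : ∀ x, T x ≤ 1)
    (hz : ∀ x, x ≤ a ∨ b ≤ x → T x = 0) (x : ℝ) :
    |∫ t in (0:ℝ)..x, T t| ≤ b - a := by
  have hint : ∀ u v : ℝ, IntervalIntegrable T MeasureTheory.volume u v :=
    fun u v => hc.intervalIntegrable u v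
  have congr0 : ∀ u v : ℝ, u ≤ v → v ≤ a → (∫ t in u..v, T t) = 0 := by
    intro u v huv hva
    rw [intervalIntegral.integral_congr (g := fun _ => (0:ℝ)), intervalIntegral.integral_zero]
    intro t ht
    rw [Set.uIcc_of_le huv] at ht
    exact hz t (Or.inl (le_trans ht.2 hva))
  have congrB : ∀ u v : ℝ, b ≤ u → u ≤ v → (∫ t in u..v, T t) = 0 := by
    intro u v hbu huv
    rw [intervalIntegral.integral_congr (g := fun _ => (0:ℝ)), intervalIntegral.integral_zero]
    intro t ht
    rw [Set.uIcc_of_le huv] at ht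
    exact hz t (Or.inr (le_trans hbu ht.1))
  have mono : ∀ u v : ℝ, u ≤ v → (∫ t in (0:ℝ)..u, T t) ≤ ∫ t in (0:ℝ)..v, T t := by
    intro u v huv
    have hadd := intervalIntegral.integral_add_adjacent_intervals (hint 0 u) (hint u v)
    have hnn : 0 ≤ ∫ t in u..v, T t :=
      intervalIntegral.integral_nonneg huv (fun t _ => hT0 t)
    linarith
  rcases le_or_gt x 0 with hx | hx
  · have : (∫ t in (0:ℝ)..x, T t) = - ∫ t in x..(0:ℝ), T t := intervalIntegral.integral_symm _ _
    rw [this, congr0 x 0 hx h0]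
    simpa using sub_nonneg.mpr hab
  · have hFb : (∫ t in (0:ℝ)..b, T t) ≤ b - a := by
      have hadd := intervalIntegral.integral_add_adjacent_intervals (hint 0 a) (hint a b)
      have h1 : (∫ t in (0:ℝ)..a, T t) = 0 := congr0 0 a h0 le_rfl
      have h2 : (∫ t in a..b, T t) ≤ ∫ t in a..b, (1:ℝ) := by
        apply intervalIntegral.integral_mono_on hab (hint a b)
          (intervalIntegrable_const)
        exact fun t _ => hT1 t
      rw [intervalIntegral.integral_const] at h2
      simp only [smul_eq_mul, mul_one] at h2
      linarith
    have hnn : 0 ≤ ∫ t in (0:ℝ)..x, T t := by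
      have := mono 0 x hx.le
      simpa using this
    rw [abs_of_nonneg hnn]
    rcases le_or_gt x b with hxb | hxb
    · exact le_trans (mono x b hxb) hFb
    · have hadd := intervalIntegral.integral_add_adjacent_intervals (hint 0 b) (hint b x)
      rw [congrB b x le_rfl hxb.le] at hadd
      simp only [add_zero] at hadd
      rw [← hadd]
      exact hFb

end Dir1
/-! ### Direction 1: the function construction -/

noncomputable section Dir1B

open Set

def xc (n : ℕ) : ℝ := tp n * (3/4)

def wd (n i : ℕ) : ℝ := min (tp n / 8) (tp i)

lemma wd_pos (n i : ℕ) : 0 < wd n i :=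
  lt_min (by have := tp_pos n; linarith) (tp_pos i)

lemma wd_le_shell (n i : ℕ) : wd n i ≤ tp n / 8 := min_le_left _ _

lemma wd_le_stage (n i : ℕ) : wd n i ≤ tp i := min_le_right _ _

lemma xc_mem (n : ℕ) : xc n ∈ Set.Icc (0:ℝ) 1 := by
  constructor
  · have := tp_pos n; unfold xc; positivity
  · have := tp_le_one n; unfold xc; nlinarith

lemma xc_sep {m n : ℕ} (h : m ≠ n) : tp n / 8 ≤ |xc m - xc n| := by
  rcases lt_or_gt_of_ne h with hlt | hgt
  · -- m < n : xc m bigger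
    have h1 : tp n ≤ tp (m+1) := tp_antitone hlt
    have h2 : tp (m+1) = tp m / 2 := tp_succ m
    have h3 : tp n ≤ tp m := tp_antitone hlt.le
    have hpos := tp_pos n
    rw [abs_of_nonneg (by unfold xc; nlinarith)]
    unfold xc; nlinarith
  · -- n < m : xc m smaller
    have h1 : tp m ≤ tp (n+1) := tp_antitone hgt
    have h2 : tp (n+1) = tp n / 2 := tp_succ n
    have hpos := tp_pos n
    rw [abs_of_nonpos (by unfold xc; nlinarith)]
    unfold xc; nlinarith

def active (p : Baire) (i : ℕ) : Prop := p i ≠ 0 ∧ ∀ j < i, p j ≠ p i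

def vi (p : Baire) (i : ℕ) : ℕ := p i - 1

open Classical in
def termD (p : Baire) (i : ℕ) : ℝ → ℝ := fun x =>
  if active p i then tp (vi p i) * tri (xc (vi p i)) (wd (vi p i) i) x else 0

def termF (p : Baire) (i : ℕ) : ℝ → ℝ := fun x => ∫ t in (0:ℝ)..x, termD p i t

open Classical in
def uD (p : Baire) (i : ℕ) : ℝ := if active p i then tp (vi p i) else 0

lemma termD_eq_pos {p : Baire} {i : ℕ} (h : active p i) :
    termD p i = fun x => tp (vi p i) * tri (xc (vi p i)) (wd (vi p i) i) x := by
  funext x; exact if_pos h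

lemma termD_eq_neg {p : Baire} {i : ℕ} (h : ¬ active p i) : termD p i = fun _ => 0 := by
  funext x; exact if_neg h

lemma uD_eq_pos {p : Baire} {i : ℕ} (h : active p i) : uD p i = tp (vi p i) := if_pos h

lemma uD_eq_neg {p : Baire} {i : ℕ} (h : ¬ active p i) : uD p i = 0 := if_neg h

lemma termD_continuous (p : Baire) (i : ℕ) : Continuous (termD p i) := by
  by_cases h : active p i
  · rw [termD_eq_pos h]; exact continuous_const.mul (tri_continuous _ _)
  · rw [termD_eq_neg h]; exact continuous_const

lemma termD_nonneg (p : Baire) (i : ℕ) (x : ℝ) : 0 ≤ termD p i x := by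
  by_cases h : active p i
  · rw [termD_eq_pos h]
    have := tp_pos (vi p i); have := tri_nonneg (xc (vi p i)) (wd (vi p i) i) x
    positivity
  · rw [termD_eq_neg h]

lemma termD_le_one (p : Baire) (i : ℕ) (x : ℝ) : termD p i x ≤ 1 := by
  by_cases h : active p i
  · rw [termD_eq_pos h]
    show tp (vi p i) * tri (xc (vi p i)) (wd (vi p i) i) x ≤ 1
    have h1 := tp_le_one (vi p i)
    have h2 := tri_le_one (c := xc (vi p i)) (wd_pos (vi p i) i) x
    have h3 := tri_nonneg (xc (vi p i)) (wd (vi p i) i) x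
    have h4 := (tp_pos (vi p i)).le
    nlinarith
  · rw [termD_eq_neg h]; norm_num

lemma termD_abs_le (p : Baire) (i : ℕ) (x : ℝ) : ‖termD p i x‖ ≤ uD p i := by
  rw [Real.norm_eq_abs, abs_of_nonneg (termD_nonneg p i x)]
  by_cases h : active p i
  · rw [termD_eq_pos h, uD_eq_pos h]
    show tp (vi p i) * tri (xc (vi p i)) (wd (vi p i) i) x ≤ tp (vi p i)
    have h2 := tri_le_one (c := xc (vi p i)) (wd_pos (vi p i) i) x
    have h3 := tri_nonneg (xc (vi p i)) (wd (vi p i) i) x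
    have h4 := (tp_pos (vi p i)).le
    nlinarith
  · rw [termD_eq_neg h, uD_eq_neg h]

lemma uD_le_one (p : Baire) (i : ℕ) : uD p i ≤ 1 := by
  by_cases h : active p i
  · rw [uD_eq_pos h]; exact tp_le_one _
  · rw [uD_eq_neg h]; norm_num

lemma termD_zero_outside (p : Baire) (i : ℕ) {x : ℝ}
    (h : x ≤ xc (vi p i) - wd (vi p i) i ∨ xc (vi p i) + wd (vi p i) i ≤ x) :
    termD p i x = 0 := by
  by_cases ha : active p i
  swap
  · rw [termD_eq_neg ha]
  · rw [termD_eq_pos ha]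
    show tp (vi p i) * tri (xc (vi p i)) (wd (vi p i) i) x = 0
    rw [tri_zero_of_far (wd_pos _ _), mul_zero]
    rcases h with h | h
    · rw [abs_of_nonpos (by linarith [wd_pos (vi p i) i])]; linarith
    · rw [abs_of_nonneg (by linarith [wd_pos (vi p i) i])]; linarith

lemma termF_hasDeriv (p : Baire) (i : ℕ) (x : ℝ) :
    HasDerivAt (termF p i) (termD p i x) x :=
  ((termD_continuous p i).integral_hasStrictDerivAt 0 x).hasDerivAt

lemma termF_continuous (p : Baire) (i : ℕ) : Continuous (termF p i) :=
  continuous_iff_continuousAt.2 fun x => (termF_hasDeriv p i x).continuousAt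

lemma termF_abs_le (p : Baire) (i : ℕ) (x : ℝ) : |termF p i x| ≤ 2 * tp i := by
  set n := vi p i
  have hwp := wd_pos n i
  have hxm := xc_mem n
  have h0 : (0:ℝ) ≤ xc n - wd n i := by
    have h1 := wd_le_shell n i
    have h2 := tp_pos n
    unfold xc at *; nlinarith
  have key := primitive_bounds (termD_continuous p i) h0 (by linarith)
    (termD_nonneg p i) (termD_le_one p i) (fun y hy => termD_zero_outside p i hy) x
  calc |termF p i x| ≤ (xc n + wd n i) - (xc n - wd n i) := key
    _ = 2 * wd n i := by ring
    _ ≤ 2 * tp i := by linarith [wd_le_stage n i]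

lemma sum_uD_le (p : Baire) (N : ℕ) : ∑ i ∈ Finset.range N, uD p i ≤ 2 := by
  classical
  have h1 : ∑ i ∈ Finset.range N, uD p i
      = ∑ i ∈ (Finset.range N).filter (fun i => active p i), tp (vi p i) := by
    rw [Finset.sum_filter]
    apply Finset.sum_congr rfl
    intro i _
    by_cases h : active p i
    · rw [uD_eq_pos h, if_pos h]
    · rw [uD_eq_neg h, if_neg h]
  rw [h1]
  have hinj : ∀ x ∈ (Finset.range N).filter (fun i => active p i),
      ∀ y ∈ (Finset.range N).filter (fun i => active p i), vi p x = vi p y → x = y := by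
    intro i hi j hj hij
    simp only [Finset.mem_filter] at hi hj
    by_contra hne
    have hpij : p i = p j := by
      have h1 : p i ≠ 0 := hi.2.1
      have h2 : p j ≠ 0 := hj.2.1
      unfold vi at hij; omega
    rcases lt_or_gt_of_ne hne with h | h
    · exact hj.2.2 i h hpij
    · exact hi.2.2 j h hpij.symm
  have h2 : ∑ i ∈ (Finset.range N).filter (fun i => active p i), tp (vi p i)
      = ∑ n ∈ Finset.image (vi p) ((Finset.range N).filter (fun i => active p i)), tp n := by
    classical
    exact (Finset.sum_image hinj).symm
  rw [h2]
  calc ∑ n ∈ Finset.image (vi p) ((Finset.range N).filter (fun i => active p i)), tp n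
      ≤ ∑' n, tp n := Summable.sum_le_tsum _ (fun n _ => (tp_pos n).le) summable_tp
    _ = 2 := tsum_tp

lemma uD_nonneg (p : Baire) (i : ℕ) : 0 ≤ uD p i := by
  by_cases h : active p i
  · rw [uD_eq_pos h]; exact (tp_pos _).le
  · rw [uD_eq_neg h]

lemma summable_uD (p : Baire) : Summable (uD p) :=
  summable_of_sum_range_le (uD_nonneg p) (sum_uD_le p)

lemma summable_termF_abs (p : Baire) (x : ℝ) : Summable (fun i => |termF p i x|) :=
  Summable.of_nonneg_of_le (fun i => abs_nonneg _) (fun i => termF_abs_le p i x)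
    (summable_tp.mul_left 2)

lemma summable_termF (p : Baire) (x : ℝ) : Summable (fun i => termF p i x) :=
  (summable_termF_abs p x).of_abs

def fsum (p : Baire) : ℝ → ℝ := fun x => ∑' i, termF p i x

def gsum (p : Baire) : ℝ → ℝ := fun x => ∑' i, termD p i x

lemma fsum_hasDeriv (p : Baire) (x : ℝ) : HasDerivAt (fsum p) (gsum p x) x := by
  apply hasDerivAt_tsum (u := uD p) (summable_uD p)
    (fun i y => termF_hasDeriv p i y) (fun i y => termD_abs_le p i y)
    (y₀ := 0)
  have : (fun i => termF p i 0) = fun _ => (0:ℝ) := by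
    funext i; simp [termF]
  rw [this]
  exact summable_zero

lemma gsum_continuous (p : Baire) : Continuous (gsum p) :=
  continuous_tsum (termD_continuous p) (summable_uD p) (fun i x => termD_abs_le p i x)

lemma fsum_continuous (p : Baire) : Continuous (fsum p) :=
  continuous_iff_continuousAt.2 fun x => (fsum_hasDeriv p x).continuousAt

def fCm (p : Baire) : C(Set.Icc (0:ℝ) 1, ℝ) :=
  ⟨fun x => fsum p x, (fsum_continuous p).comp continuous_subtype_val⟩

def gCm (p : Baire) : C(Set.Icc (0:ℝ) 1, ℝ) :=
  ⟨fun x => gsum p x, (gsum_continuous p).comp continuous_subtype_val⟩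

lemma isDerivOn_fCm (p : Baire) : IsDerivOn (fCm p) (gCm p) := by
  intro x
  have h := (fsum_hasDeriv p x).hasDerivWithinAt (s := Set.Icc (0:ℝ) 1)
  apply h.congr
  · intro y hy
    rw [Set.IccExtend_of_mem _ _ hy]
    rfl
  · rw [Set.IccExtend_of_mem _ _ x.2]
    rfl

end Dir1B
/-! ### Direction 1: names and the reduction EC ≤ diffP -/

noncomputable section Dir1C

open Set

def partF (p : Baire) (s : ℕ) : ℝ → ℝ := fun x => ∑ i ∈ Finset.range s, termF p i x

lemma partF_continuous (p : Baire) (s : ℕ) : Continuous (partF p s) :=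
  continuous_finset_sum _ (fun i _ => termF_continuous p i)

def partC (p : Baire) (s : ℕ) : C(Set.Icc (0:ℝ) 1, ℝ) :=
  ⟨fun x => partF p s x, (partF_continuous p s).comp continuous_subtype_val⟩

lemma norm_fCm_sub_partC (p : Baire) (s : ℕ) : ‖fCm p - partC p s‖ ≤ 4 * tp s := by
  apply (ContinuousMap.norm_le _ (by have := tp_pos s; linarith : (0:ℝ) ≤ 4 * tp s)).mpr
  intro x
  have hsum := summable_termF p (x:ℝ)
  have key := Summable.sum_add_tsum_nat_add (f := fun i => termF p i (x:ℝ)) s hsum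
  have heq : (fCm p - partC p s) x = ∑' i, termF p (i + s) (x:ℝ) := by
    simp only [ContinuousMap.sub_apply]
    show fsum p x - partF p s x = _
    unfold fsum partF
    linarith [key]
  rw [heq]
  have hb : Summable (fun i => 2 * tp (i + s)) :=
    (summable_nat_add_iff (f := fun i => 2 * tp i) s).mpr (summable_tp.mul_left 2)
  have habs : Summable (fun i => |termF p (i + s) (x:ℝ)|) :=
    (summable_nat_add_iff (f := fun i => |termF p i (x:ℝ)|) s).mpr (summable_termF_abs p x)
  have habs' : Summable (fun i => ‖termF p (i + s) (x:ℝ)‖) := by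
    simpa only [Real.norm_eq_abs] using habs
  have s1 : ‖∑' i, termF p (i + s) (x:ℝ)‖ ≤ ∑' i, ‖termF p (i + s) (x:ℝ)‖ :=
    norm_tsum_le_tsum_norm habs'
  have s2 : ∑' i, ‖termF p (i + s) (x:ℝ)‖ ≤ ∑' i, 2 * tp (i + s) :=
    Summable.tsum_le_tsum (fun i => by rw [Real.norm_eq_abs]; exact termF_abs_le p (i+s) (x:ℝ))
      habs' hb
  have s3 : ∑' i, 2 * tp (i + s) = 4 * tp s := by
    have h1 : (fun i => 2 * tp (i + s)) = fun i => (2 * tp s) * tp i := by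
      funext i; rw [tp_add]; ring
    rw [h1, tsum_mul_left, tsum_tp]; ring
  linarith

def pickPoly (f : C(Set.Icc (0:ℝ) 1, ℝ)) (n : ℕ) : ℕ :=
  Classical.choose (exists_polyFun_near f (tp_pos (n+2)))

lemma pickPoly_spec (f : C(Set.Icc (0:ℝ) 1, ℝ)) (n : ℕ) :
    ‖f - polyFun (pickPoly f n)‖ ≤ tp (n+2) :=
  Classical.choose_spec (exists_polyFun_near f (tp_pos (n+2)))

def K1 (p : Baire) : Baire := fun n => pickPoly (partC p (n+4)) n

lemma deltaC_K1 (p : Baire) : deltaC (K1 p) (fCm p) := by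
  intro n
  have hch : ‖partC p (n+4) - polyFun (K1 p n)‖ ≤ tp (n+2) := pickPoly_spec (partC p (n+4)) n
  have h1 : ‖fCm p - polyFun (K1 p n)‖
      ≤ ‖fCm p - partC p (n+4)‖ + ‖partC p (n+4) - polyFun (K1 p n)‖ := by
    calc ‖fCm p - polyFun (K1 p n)‖
        = ‖(fCm p - partC p (n+4)) + (partC p (n+4) - polyFun (K1 p n))‖ := by ring_nf
      _ ≤ _ := norm_add_le _ _
  have h2 := norm_fCm_sub_partC p (n+4)
  have h3 : 4 * tp (n+4) = tp (n+2) := by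
    have : tp (n+4) = tp (n+2) * tp 2 := by
      have : n + 4 = (n+2) + 2 := by ring
      rw [this, tp_add]
    rw [this]; unfold tp; norm_num; ring
  have h4 : tp (n+2) + tp (n+2) ≤ tp n := by
    have e1 := tp_succ (n+1)
    have e2 := tp_succ n
    have : n + 2 = (n+1)+1 := by ring
    rw [this, e1, e2]
    have := tp_pos n
    linarith
  have : ‖fCm p - polyFun (K1 p n)‖ ≤ tp n := by
    calc ‖fCm p - polyFun (K1 p n)‖ ≤ 4 * tp (n+4) + tp (n+2) := by linarith
      _ = tp (n+2) + tp (n+2) := by rw [h3]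
      _ ≤ tp n := h4
  exact this

lemma K1_mem_dom (p : Baire) : K1 p ∈ diffP.dom :=
  ⟨fCm p, gCm p, deltaC_K1 p, isDerivOn_fCm p⟩

/-! Decoding -/

lemma termD_at_xc_eq_zero (p : Baire) (i n : ℕ) (hne : ¬(active p i ∧ p i = n + 1)) :
    termD p i (xc n) = 0 := by
  by_cases ha : active p i
  swap
  · rw [termD_eq_neg ha]
  · have hm : vi p i ≠ n := by
      intro hv
      apply hne
      refine ⟨ha, ?_⟩
      have := ha.1
      unfold vi at hv
      omega
    apply termD_zero_outside
    have hsep := xc_sep (show n ≠ vi p i from fun h => hm h.symm)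
    have hws := wd_le_shell (vi p i) i
    rcases abs_cases (xc n - xc (vi p i)) with ⟨he, _⟩ | ⟨he, _⟩
    · right; rw [he] at hsep; linarith
    · left; rw [he] at hsep; linarith

lemma gsum_at_xc_mem (p : Baire) (n : ℕ) (h : n ∈ rangeM p) : gsum p (xc n) = tp n := by
  obtain ⟨i, hi⟩ := h
  have hex : ∃ i, p i = n + 1 := ⟨i, hi⟩
  set i₀ := Nat.find hex with hi₀
  have hspec : p i₀ = n + 1 := Nat.find_spec hex
  have hact : active p i₀ := by
    constructor
    · rw [hspec]; omega
    · intro j hj heq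
      exact Nat.find_min hex hj (by rw [heq, hspec])
  have hvi : vi p i₀ = n := by unfold vi; omega
  unfold gsum
  rw [tsum_eq_single i₀]
  · rw [termD_eq_pos hact, hvi]
    show tp n * tri (xc n) (wd n i₀) (xc n) = tp n
    rw [tri_center _ (wd_pos n i₀), mul_one]
  · intro i hine
    apply termD_at_xc_eq_zero
    rintro ⟨hai, hpi⟩
    have h1 : i₀ ≤ i := Nat.find_le (by rw [hpi])
    rcases lt_or_eq_of_le h1 with h2 | h2
    · exact hai.2 i₀ h2 (by rw [hspec, hpi])
    · exact hine (h2.symm)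

lemma gsum_at_xc_not_mem (p : Baire) (n : ℕ) (h : n ∉ rangeM p) : gsum p (xc n) = 0 := by
  unfold gsum
  convert tsum_zero with i
  apply termD_at_xc_eq_zero
  rintro ⟨_, hpi⟩
  exact h ⟨i, hpi⟩

def ptI (n : ℕ) : Set.Icc (0:ℝ) 1 := ⟨xc n, xc_mem n⟩

open Classical in
def H1 : Baire → Baire := fun r n =>
  if tp n / 2 < polyFun (r (2*n+5)) (ptI n) then 1 else 0

lemma pairB_odd (p q : Baire) (k : ℕ) : pairB p q (2*k+1) = q k := by
  show pairB p q (2*k+1) = q k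
  have h1 : (2*k+1) % 2 = 1 := by omega
  have h2 : (2*k+1) / 2 = k := by omega
  simp [pairB, h1, h2]

lemma wred_EC_diffP : WRed EC diffP := by
  refine ⟨Set.univ, Set.univ, K1, H1, ?_, ?_, ?_⟩
  · -- continuity of K1
    apply Continuous.continuousOn
    apply continuous_pi
    intro n
    apply continuous_of_finite_dep (s := n+4)
    intro p q hpq
    show pickPoly (partC p (n+4)) n = pickPoly (partC q (n+4)) n
    have hpart : partC p (n+4) = partC q (n+4) := by
      apply ContinuousMap.ext
      intro x
      show partF p (n+4) x = partF q (n+4) x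
      unfold partF
      apply Finset.sum_congr rfl
      intro i hi
      rw [Finset.mem_range] at hi
      have hterm : termD p i = termD q i := by
        have hip : p i = q i := hpq i (by omega)
        have hact : active p i ↔ active q i := by
          unfold active
          rw [hip]
          constructor <;> rintro ⟨h1, h2⟩ <;> refine ⟨h1, fun j hj => ?_⟩
          · rw [← hpq j (by omega)]; exact h2 j hj
          · rw [hpq j (by omega)]; exact h2 j hj
        by_cases ha : active p i
        · rw [termD_eq_pos ha, termD_eq_pos (hact.mp ha)]
          unfold vi
          rw [hip]
        · rw [termD_eq_neg ha, termD_eq_neg (fun hh => ha (hact.mpr hh))]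
      show (∫ t in (0:ℝ)..(x:ℝ), termD p i t) = ∫ t in (0:ℝ)..(x:ℝ), termD q i t
      rw [hterm]
    rw [hpart]
  · -- continuity of H1
    apply Continuous.continuousOn
    apply continuous_pi
    intro n
    apply continuous_of_finite_dep (s := 2*n+6)
    intro r r' hr
    unfold H1
    rw [hr (2*n+5) (by omega)]
  · intro p _
    refine ⟨trivial, K1_mem_dom p, ?_⟩
    intro q hq
    refine ⟨trivial, ?_⟩
    obtain ⟨f', g', h1, h2, h3⟩ := hq
    have hf : f' = fCm p := deltaC_unique h1 (deltaC_K1 p)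
    subst hf
    have hg : g' = gCm p := isDerivOn_unique h2 (isDerivOn_fCm p)
    subst hg
    show H1 (pairB p q) ∈ EC.sol p
    show H1 (pairB p q) ∈ {chi (rangeM p)}
    rw [Set.mem_singleton_iff]
    funext n
    have hcoord : pairB p q (2*n+5) = q (n+2) := by
      have : 2*n+5 = 2*(n+2)+1 := by ring
      rw [this, pairB_odd]
    have hev := deltaC_eval_close h3 (n+2) (ptI n)
    have hgval : gCm p (ptI n) = gsum p (xc n) := rfl
    have htp2 : tp (n+2) = tp n / 4 := by
      have e1 := tp_succ (n+1)
      have e2 := tp_succ n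
      have e3 : n + 2 = (n+1)+1 := by ring
      rw [e3, e1, e2]; ring
    have htpn := tp_pos n
    unfold H1
    rw [hcoord]
    by_cases hn : n ∈ rangeM p
    · rw [chi_apply_mem hn]
      rw [if_pos]
      rw [hgval, gsum_at_xc_mem p n hn] at hev
      have : tp (n+2) = (2:ℝ) ^ (-((n:ℕ)+2:ℕ):ℤ) := rfl
      rw [← this] at hev
      rcases abs_cases (tp n - polyFun (q (n+2)) (ptI n)) with ⟨he, _⟩ | ⟨he, _⟩ <;>
        rw [he] at hev <;> linarith [htp2 ▸ hev]
    · rw [chi_apply_not_mem hn]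
      rw [if_neg]
      rw [hgval, gsum_at_xc_not_mem p n hn] at hev
      have : tp (n+2) = (2:ℝ) ^ (-((n:ℕ)+2:ℕ):ℤ) := rfl
      rw [← this] at hev
      push_neg
      rcases abs_cases (0 - polyFun (q (n+2)) (ptI n)) with ⟨he, _⟩ | ⟨he, _⟩ <;>
        rw [he] at hev <;> linarith [htp2 ▸ hev]

end Dir1C
/-! ### Direction 2: polynomial antiderivatives, MVT tools -/

noncomputable section Dir2A

open Set

def QfunOf (P : Polynomial ℝ) : ℝ → ℝ := fun x =>
  ∑ k ∈ Finset.range (P.natDegree + 1), P.coeff k * x ^ (k+1) / (k+1)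

lemma QfunOf_hasDeriv (P : Polynomial ℝ) (x : ℝ) :
    HasDerivAt (QfunOf P) (P.eval x) x := by
  have h : P.eval x = ∑ k ∈ Finset.range (P.natDegree + 1), P.coeff k * x ^ k :=
    P.eval_eq_sum_range x
  rw [h]
  apply HasDerivAt.fun_sum
  intro k _
  have hk : ((k:ℝ) + 1) ≠ 0 := by positivity
  have h1 : HasDerivAt (fun y : ℝ => y ^ (k+1)) (((k:ℕ)+1 : ℕ) * x ^ k) x := by
    simpa using hasDerivAt_pow (k+1) x
  have h2 := h1.const_mul (P.coeff k / ((k:ℝ)+1))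
  have he : P.coeff k / ((k:ℝ)+1) * (((k:ℕ)+1 : ℕ) * x ^ k) = P.coeff k * x ^ k := by
    push_cast
    field_simp
  rw [he] at h2
  convert h2 using 2 with y
  · rfl
  · ring
lemma QfunOf_continuous (P : Polynomial ℝ) : Continuous (QfunOf P) :=
  continuous_iff_continuousAt.2 fun x => (QfunOf_hasDeriv P x).continuousAt

def Pr (j : ℕ) : ℝ → ℝ := fun x => ((polyEnum j).map (algebraMap ℚ ℝ)).eval x

def Qr (j : ℕ) : ℝ → ℝ := QfunOf ((polyEnum j).map (algebraMap ℚ ℝ))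

lemma Qr_hasDeriv (j : ℕ) (x : ℝ) : HasDerivAt (Qr j) (Pr j x) x :=
  QfunOf_hasDeriv _ x

lemma Pr_continuous (j : ℕ) : Continuous (Pr j) :=
  ((polyEnum j).map (algebraMap ℚ ℝ)).continuous

def le01 : (0:ℝ) ≤ 1 := by norm_num

def projI (x : ℝ) : Set.Icc (0:ℝ) 1 := Set.projIcc 0 1 le01 x

lemma projI_coe {x : ℝ} (hx : x ∈ Set.Icc (0:ℝ) 1) : ((projI x : Set.Icc (0:ℝ) 1) : ℝ) = x := by
  unfold projI
  rw [Set.projIcc_of_mem le01 hx]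

lemma polyFun_eq_Pr (j : ℕ) (x : Set.Icc (0:ℝ) 1) : polyFun j x = Pr j (x:ℝ) := rfl

lemma continuous_projI : Continuous projI := continuous_projIcc (h := le01)

/-- The extension of `f` used in `IsDerivOn`. -/
def extE (f : C(Set.Icc (0:ℝ) 1, ℝ)) : ℝ → ℝ :=
  Set.IccExtend le01 f

lemma extE_eq (f : C(Set.Icc (0:ℝ) 1, ℝ)) (x : ℝ) : extE f x = f (projI x) := rfl

lemma extE_continuous (f : C(Set.Icc (0:ℝ) 1, ℝ)) : Continuous (extE f) :=
  f.continuous.comp continuous_projI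

lemma isDerivOn_extE {f g : C(Set.Icc (0:ℝ) 1, ℝ)} (h : IsDerivOn f g) (x : Set.Icc (0:ℝ) 1) :
    HasDerivWithinAt (extE f) (g x) (Set.Icc 0 1) (x:ℝ) := h x

/-- Mean value theorem for `extE f - Qr j` on rational subintervals. -/
lemma mvt_slope {f g : C(Set.Icc (0:ℝ) 1, ℝ)} (h : IsDerivOn f g) (j : ℕ)
    {a b : ℝ} (ha : 0 ≤ a) (hb : b ≤ 1) (hab : a < b) :
    ∃ ξ ∈ Set.Ioo a b,
      g (projI ξ) - Pr j ξ =
        ((extE f b - Qr j b) - (extE f a - Qr j a)) / (b - a) := by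
  have hsub : Set.Icc a b ⊆ Set.Icc (0:ℝ) 1 := Set.Icc_subset_Icc ha hb
  have hIoo : Set.Ioo a b ⊆ Set.Ioo (0:ℝ) 1 := Set.Ioo_subset_Ioo ha hb
  have hcont : ContinuousOn (fun x => extE f x - Qr j x) (Set.Icc a b) :=
    ((extE_continuous f).sub (QfunOf_continuous _)).continuousOn
  have hderiv : ∀ x ∈ Set.Ioo a b,
      HasDerivAt (fun x => extE f x - Qr j x) (g (projI x) - Pr j x) x := by
    intro x hx
    have hxI : x ∈ Set.Icc (0:ℝ) 1 := Set.mem_Icc_of_Ioo (hIoo hx)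
    have h1 : HasDerivWithinAt (extE f) (g (projI x)) (Set.Icc 0 1) x := by
      have := h (projI x)
      rwa [projI_coe hxI] at this
    have h2 : HasDerivAt (extE f) (g (projI x)) x := by
      apply h1.hasDerivAt
      exact Icc_mem_nhds (hIoo hx).1 (hIoo hx).2
    exact h2.sub (Qr_hasDeriv j x)
  obtain ⟨ξ, hξ, hslope⟩ :=
    exists_hasDerivAt_eq_slope (fun x => extE f x - Qr j x)
      (fun x => g (projI x) - Pr j x) hab hcont hderiv
  exact ⟨ξ, hξ, hslope⟩

end Dir2A
/-! ### Direction 2: the reduction diffP ≤ EC -/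

noncomputable section Dir2B

open Set

lemma ratEnum_surjective : Function.Surjective ratEnum := by
  intro q
  refine ⟨Nat.pair q.num.toNat (Nat.pair (-q.num).toNat (q.den - 1)), ?_⟩
  unfold ratEnum
  simp only [Nat.unpair_pair]
  have hden : 1 ≤ q.den := q.pos
  have hnum : ((q.num.toNat : ℚ)) - (((-q.num).toNat : ℚ)) = (q.num : ℚ) := by
    have key : (q.num.toNat : ℤ) - ((-q.num).toNat : ℤ) = q.num := by omega
    exact_mod_cast key
  have hd : ((q.den - 1 : ℕ) : ℚ) + 1 = (q.den : ℚ) := by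
    have : (q.den - 1) + 1 = q.den := by omega
    exact_mod_cast congrArg (Nat.cast : ℕ → ℚ) this
  rw [hnum, hd, Rat.num_div_den]

open Classical in
def K2aux (n j i1 i2 m v : ℕ) : ℕ :=
  if (0 ≤ (ratEnum i1 : ℝ) ∧ (ratEnum i2 : ℝ) ≤ 1 ∧ (ratEnum i1 : ℝ) < (ratEnum i2 : ℝ) ∧
      tp (n+1) * ((ratEnum i2 : ℝ) - (ratEnum i1 : ℝ)) + 2 * tp m <
        |(polyFun v (projI (ratEnum i2)) - Qr j (ratEnum i2))
          - (polyFun v (projI (ratEnum i1)) - Qr j (ratEnum i1))|)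
  then Nat.pair n j + 1 else 0

def K2 : Baire → Baire := fun p e =>
  K2aux e.unpair.1 e.unpair.2.unpair.1 e.unpair.2.unpair.2.unpair.1
    e.unpair.2.unpair.2.unpair.2.unpair.1 e.unpair.2.unpair.2.unpair.2.unpair.2
    (p e.unpair.2.unpair.2.unpair.2.unpair.2)

lemma tp_eq_zpow (m : ℕ) : tp m = (2:ℝ) ^ (-(m:ℤ)) := rfl

/-- Approximation error transported through the antiderivative difference. -/
lemma approx_err {p : Baire} {fc : C(Set.Icc (0:ℝ) 1, ℝ)} (hf : deltaC p fc)
    (m j : ℕ) (y : ℝ) :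
    |(polyFun (p m) (projI y) - Qr j y) - (extE fc y - Qr j y)| ≤ tp m := by
  have h := deltaC_eval_close hf m (projI y)
  rw [extE_eq]
  rw [abs_sub_comm] at h
  calc |(polyFun (p m) (projI y) - Qr j y) - (fc (projI y) - Qr j y)|
      = |polyFun (p m) (projI y) - fc (projI y)| := by ring_nf
    _ ≤ (2:ℝ) ^ (-(m:ℤ)) := h

lemma exists_tp_lt {c : ℝ} (hc : 0 < c) : ∃ m : ℕ, tp m < c := by
  obtain ⟨m, hm⟩ := exists_pow_lt_of_lt_one hc (by norm_num : (2:ℝ)⁻¹ < 1)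
  exact ⟨m, by rw [tp_eq]; exact hm⟩

/-- Characterization of the range of `K2 p`. -/
lemma K2_range {p : Baire} {fc gc : C(Set.Icc (0:ℝ) 1, ℝ)}
    (hf : deltaC p fc) (hg : IsDerivOn fc gc) (k : ℕ) :
    k ∈ rangeM (K2 p) ↔ ∃ n j, k = Nat.pair n j ∧ tp (n+1) < ‖gc - polyFun j‖ := by
  constructor
  · rintro ⟨e, he⟩
    set n := e.unpair.1
    set j := e.unpair.2.unpair.1
    set i1 := e.unpair.2.unpair.2.unpair.1
    set i2 := e.unpair.2.unpair.2.unpair.2.unpair.1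
    set m := e.unpair.2.unpair.2.unpair.2.unpair.2
    have he' : K2aux n j i1 i2 m (p m) = k + 1 := he
    by_cases hcond : (0 ≤ (ratEnum i1 : ℝ) ∧ (ratEnum i2 : ℝ) ≤ 1 ∧
        (ratEnum i1 : ℝ) < (ratEnum i2 : ℝ) ∧
        tp (n+1) * ((ratEnum i2 : ℝ) - (ratEnum i1 : ℝ)) + 2 * tp m <
          |(polyFun (p m) (projI (ratEnum i2)) - Qr j (ratEnum i2))
            - (polyFun (p m) (projI (ratEnum i1)) - Qr j (ratEnum i1))|)
    swap
    · exfalso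
      rw [K2aux, if_neg hcond] at he'
      omega
    rw [K2aux, if_pos hcond] at he'
    obtain ⟨ha0, hb1, hab, hkey⟩ := hcond
    set a : ℝ := (ratEnum i1 : ℝ)
    set b : ℝ := (ratEnum i2 : ℝ)
    refine ⟨n, j, by omega, ?_⟩
    -- estimate |h b - h a|
    have e1 := approx_err hf m j a
    have e2 := approx_err hf m j b
    set ha' := extE fc a - Qr j a
    set hb' := extE fc b - Qr j b
    have hdiff : tp (n+1) * (b - a) < |hb' - ha'| := by
      set Da := polyFun (p m) (projI a) - Qr j a
      set Db := polyFun (p m) (projI b) - Qr j b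
      have t1 : |Db - Da| ≤ |hb' - ha'| + |Db - hb'| + |Da - ha'| := by
        have : Db - Da = (hb' - ha') + (Db - hb') - (Da - ha') := by ring
        rw [this]
        calc |(hb' - ha') + (Db - hb') - (Da - ha')|
            ≤ |(hb' - ha') + (Db - hb')| + |Da - ha'| := abs_sub _ _
          _ ≤ |hb' - ha'| + |Db - hb'| + |Da - ha'| := by
              have := abs_add_le (hb' - ha') (Db - hb')
              linarith
      linarith
    obtain ⟨ξ, hξ, hslope⟩ := mvt_slope hg j ha0 hb1 hab
    have hba : 0 < b - a := by linarith [hξ.1, hξ.2]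
    have hgd : tp (n+1) < |gc (projI ξ) - Pr j ξ| := by
      rw [hslope, abs_div, abs_of_pos hba, lt_div_iff₀ hba]
      exact hdiff
    have hξI : ξ ∈ Set.Icc (0:ℝ) 1 :=
      ⟨le_trans ha0 hξ.1.le, le_trans hξ.2.le hb1⟩
    have hval : (gc - polyFun j) (projI ξ) = gc (projI ξ) - Pr j ξ := by
      rw [ContinuousMap.sub_apply, polyFun_eq_Pr, projI_coe hξI]
    calc tp (n+1) < |gc (projI ξ) - Pr j ξ| := hgd
      _ = ‖(gc - polyFun j) (projI ξ)‖ := by rw [hval]; rfl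
      _ ≤ ‖gc - polyFun j‖ := (gc - polyFun j).norm_coe_le_norm _
  · rintro ⟨n, j, hk, hnorm⟩
    -- find a point where the difference is large
    have hz : ∃ z : Set.Icc (0:ℝ) 1, tp (n+1) < |gc z - polyFun j z| := by
      by_contra hcon
      push_neg at hcon
      have : ‖gc - polyFun j‖ ≤ tp (n+1) := by
        apply (ContinuousMap.norm_le _ (tp_pos (n+1)).le).mpr
        intro z
        rw [ContinuousMap.sub_apply]
        exact hcon z
      linarith
    obtain ⟨z, hzval⟩ := hz
    set φ : ℝ → ℝ := fun x => |gc (projI x) - Pr j x| with hφdef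
    have hφcont : Continuous φ :=
      ((gc.continuous.comp continuous_projI).sub (Pr_continuous j)).abs
    have hφz : φ (z:ℝ) = |gc z - polyFun j z| := by
      have h1 : projI (z:ℝ) = z := by
        apply Subtype.ext
        exact projI_coe z.2
      rw [hφdef]
      simp only
      rw [h1, polyFun_eq_Pr]
    set ε := (φ (z:ℝ) - tp (n+1)) / 2 with hε
    have hεpos : 0 < ε := by rw [hε, hφz]; linarith
    obtain ⟨δ, hδpos, hball⟩ := Metric.continuousAt_iff.mp (hφcont.continuousAt) ε hεpos
    set lo := max 0 ((z:ℝ) - δ/2) with hlo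
    set hi := min 1 ((z:ℝ) + δ/2) with hhi
    have hzI := z.2
    have hlohi : lo < hi := by
      rcases lt_or_ge (z:ℝ) 1 with h1 | h1
      · have ha : lo ≤ (z:ℝ) := max_le hzI.1 (by linarith)
        have hb : (z:ℝ) < hi := lt_min h1 (by linarith)
        linarith
      · have hz1 : (z:ℝ) = 1 := le_antisymm hzI.2 h1
        have ha : lo < 1 := max_lt (by norm_num) (by rw [hz1]; linarith)
        have hb : (1:ℝ) ≤ hi := le_min le_rfl (by rw [hz1]; linarith)
        linarith
    obtain ⟨a', ha'⟩ := exists_rat_btwn hlohi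
    obtain ⟨b', hb'⟩ := exists_rat_btwn ha'.2
    have ha0 : (0:ℝ) ≤ (a' : ℝ) := le_trans (le_max_left 0 _) ha'.1.le
    have hb1 : (b' : ℝ) ≤ 1 := le_trans hb'.2.le (min_le_left 1 _)
    have hab : (a' : ℝ) < (b' : ℝ) := hb'.1
    have hfar : ∀ x : ℝ, (a':ℝ) ≤ x → x ≤ (b':ℝ) → tp (n+1) + ε < φ x := by
      intro x hx1 hx2
      have hxlo : lo < x := lt_of_lt_of_le ha'.1 hx1
      have hxhi : x < hi := lt_of_le_of_lt hx2 hb'.2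
      have hd : dist x (z:ℝ) < δ := by
        rw [Real.dist_eq, abs_lt]
        constructor
        · have := le_max_right 0 ((z:ℝ) - δ/2)
          have : (z:ℝ) - δ/2 ≤ lo := le_max_right 0 _
          linarith
        · have : hi ≤ (z:ℝ) + δ/2 := min_le_right 1 _
          linarith
      have := hball hd
      rw [Real.dist_eq, abs_lt] at this
      have hφzε : φ (z:ℝ) = tp (n+1) + 2*ε := by rw [hε]; ring
      linarith [this.1]
    obtain ⟨ξ, hξ, hslope⟩ := mvt_slope hg j ha0 hb1 hab
    have hba : 0 < (b':ℝ) - (a':ℝ) := by linarith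
    have hsl : (tp (n+1) + ε) * ((b':ℝ) - (a':ℝ)) <
        |(extE fc (b':ℝ) - Qr j (b':ℝ)) - (extE fc (a':ℝ) - Qr j (a':ℝ))| := by
      have hφξ : tp (n+1) + ε < φ ξ := hfar ξ hξ.1.le hξ.2.le
      have heq : φ ξ = |gc (projI ξ) - Pr j ξ| := rfl
      rw [heq, hslope] at hφξ
      rw [abs_div, abs_of_pos hba, lt_div_iff₀ hba] at hφξ
      exact hφξ
    obtain ⟨m, hm⟩ := exists_tp_lt (show 0 < ε * ((b':ℝ) - (a':ℝ)) / 4 by positivity)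
    obtain ⟨i1, hi1⟩ := ratEnum_surjective a'
    obtain ⟨i2, hi2⟩ := ratEnum_surjective b'
    refine ⟨Nat.pair n (Nat.pair j (Nat.pair i1 (Nat.pair i2 m))), ?_⟩
    show K2 p _ = k + 1
    unfold K2
    simp only [Nat.unpair_pair]
    rw [K2aux, hi1, hi2, if_pos, hk]
    refine ⟨ha0, hb1, hab, ?_⟩
    -- final estimate
    have e1 := approx_err hf m j (a':ℝ)
    have e2 := approx_err hf m j (b':ℝ)
    set Da := polyFun (p m) (projI (a':ℝ)) - Qr j (a':ℝ)
    set Db := polyFun (p m) (projI (b':ℝ)) - Qr j (b':ℝ)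
    set ha2 := extE fc (a':ℝ) - Qr j (a':ℝ)
    set hb2 := extE fc (b':ℝ) - Qr j (b':ℝ)
    have t1 : |hb2 - ha2| ≤ |Db - Da| + |Db - hb2| + |Da - ha2| := by
      have : hb2 - ha2 = (Db - Da) - (Db - hb2) + (Da - ha2) := by ring
      rw [this]
      calc |(Db - Da) - (Db - hb2) + (Da - ha2)|
          ≤ |(Db - Da) - (Db - hb2)| + |Da - ha2| := abs_add_le _ _
        _ ≤ |Db - Da| + |Db - hb2| + |Da - ha2| := by
            have := abs_sub (Db - Da) (Db - hb2)
            linarith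
    have hεb : 4 * tp m < ε * ((b':ℝ) - (a':ℝ)) := by
      have := hm
      linarith
    have htp : 0 < tp m := tp_pos m
    nlinarith [hsl, t1, e1, e2]
  done

end Dir2B
/-! ### Direction 2: H2 and the reduction; final theorem -/

noncomputable section Dir2C

open Set

def Hd2 : Set Baire := {r | ∀ n, ∃ j, psnd r (Nat.pair n j) = 0}

open Classical in
def H2 : Baire → Baire := fun r n =>
  if h : ∃ j, psnd r (Nat.pair n j) = 0 then Nat.find h else 0

lemma H2_contOn : ContinuousOn H2 Hd2 := by
  intro r hr
  have hall : ∀ n : ℕ, ContinuousWithinAt (fun r' => H2 r' n) Hd2 r := by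
    intro n
    have hn : ∃ j, psnd r (Nat.pair n j) = 0 := hr n
    set j₀ := Nat.find hn with hj₀
    have hH : H2 r n = j₀ := dif_pos hn
    set V : Set Baire :=
      {r' | ∀ i ∈ Finset.range (j₀+1),
        r' (2*(Nat.pair n i)+1) = r (2*(Nat.pair n i)+1)} with hV
    have hVeq : V = ⋂ i ∈ Finset.range (j₀+1),
        {r' : Baire | r' (2*(Nat.pair n i)+1) = r (2*(Nat.pair n i)+1)} := by
      ext r'
      simp [hV]
    have hVopen : IsOpen V := by
      rw [hVeq]
      apply isOpen_biInter_finset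
      intro i _
      have heq : {r' : Baire | r' (2*(Nat.pair n i)+1) = r (2*(Nat.pair n i)+1)}
          = (fun r' : Baire => r' (2*(Nat.pair n i)+1)) ⁻¹' {r (2*(Nat.pair n i)+1)} := rfl
      rw [heq]
      exact (continuous_apply _).isOpen_preimage _ (isOpen_discrete _)
    have hrV : r ∈ V := fun i _ => rfl
    have hev : (fun r' => H2 r' n) =ᶠ[nhdsWithin r Hd2] (fun _ => j₀) := by
      have h1 : V ∈ nhdsWithin r Hd2 := mem_nhdsWithin_of_mem_nhds (hVopen.mem_nhds hrV)
      have h2 : Hd2 ∈ nhdsWithin r Hd2 := self_mem_nhdsWithin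
      filter_upwards [h1, h2] with r' hr'V hr'H
      have hex' : ∃ j, psnd r' (Nat.pair n j) = 0 := hr'H n
      show H2 r' n = j₀
      rw [H2, dif_pos hex']
      have hagree : ∀ i, i ≤ j₀ → psnd r' (Nat.pair n i) = psnd r (Nat.pair n i) := by
        intro i hi
        exact hr'V i (Finset.mem_range.mpr (by omega))
      rw [Nat.find_eq_iff]
      constructor
      · rw [hagree j₀ le_rfl]
        exact Nat.find_spec hn
      · intro i hi hzero
        rw [hagree i hi.le] at hzero
        exact Nat.find_min hn hi hzero
    exact ContinuousWithinAt.congr_of_eventuallyEq continuousWithinAt_const hev hH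
  exact continuousWithinAt_pi.mpr hall

lemma pair_inj {a b c d : ℕ} (h : Nat.pair a b = Nat.pair c d) : a = c ∧ b = d := by
  have := congrArg Nat.unpair h
  rw [Nat.unpair_pair, Nat.unpair_pair] at this
  exact ⟨congrArg Prod.fst this, congrArg Prod.snd this⟩

lemma wred_diffP_EC : WRed diffP EC := by
  refine ⟨Set.univ, Hd2, K2, H2, ?_, H2_contOn, ?_⟩
  · apply Continuous.continuousOn
    apply continuous_pi
    intro e
    apply continuous_of_finite_dep (s := e.unpair.2.unpair.2.unpair.2.unpair.2 + 1)
    intro p q hpq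
    unfold K2
    rw [hpq _ (by omega)]
  · intro p hp
    obtain ⟨fc, gc, hf, hg⟩ := hp
    refine ⟨trivial, trivial, ?_⟩
    intro q hq
    have hqe : q = chi (rangeM (K2 p)) := Set.mem_singleton_iff.mp hq
    have htplt : ∀ n : ℕ, tp (n+2) < tp (n+1) := by
      intro n
      have := tp_succ (n+1)
      have := tp_pos (n+1)
      have heq : n + 2 = (n+1)+1 := by ring
      rw [heq]
      linarith
    have hHd : pairB p q ∈ Hd2 := by
      intro n
      obtain ⟨j, hj⟩ := exists_polyFun_near gc (tp_pos (n+2))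
      refine ⟨j, ?_⟩
      rw [hqe, psnd_pairB]
      apply chi_apply_not_mem
      intro hmem
      obtain ⟨n', j', hk, hnorm⟩ := (K2_range hf hg _).mp hmem
      obtain ⟨hn', hj'⟩ := pair_inj hk
      rw [← hn', ← hj'] at hnorm
      have := htplt n
      linarith
    refine ⟨hHd, ?_⟩
    refine ⟨fc, gc, hf, hg, ?_⟩
    intro n
    have hex : ∃ j, psnd (pairB p q) (Nat.pair n j) = 0 := hHd n
    obtain ⟨J, hH2, hspec⟩ : ∃ J, H2 (pairB p q) n = J ∧ psnd (pairB p q) (Nat.pair n J) = 0 :=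
      ⟨Nat.find hex, dif_pos hex, Nat.find_spec hex⟩
    have hnot : Nat.pair n J ∉ rangeM (K2 p) := by
      intro hmem
      have h1 := chi_apply_mem hmem
      have h2 : psnd (pairB p q) (Nat.pair n J)
          = chi (rangeM (K2 p)) (Nat.pair n J) := by
        rw [psnd_pairB]
        exact congrFun hqe _
      rw [h2, h1] at hspec
      exact absurd hspec (by norm_num)
    have hle : ¬ (tp (n+1) < ‖gc - polyFun J‖) := fun hlt =>
      hnot ((K2_range hf hg _).mpr ⟨n, J, rfl, hlt⟩)
    push_neg at hle
    calc ‖gc - polyFun (H2 (pairB p q) n)‖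
        = ‖gc - polyFun J‖ := by rw [hH2]
      _ ≤ tp (n+1) := hle
      _ ≤ (2:ℝ) ^ (-(n:ℤ)) := tp_antitone (by omega)

end Dir2C

/-- von Stein's theorem: `EC ≡_W d`, where `d` is differentiation on `C[0,1]`
restricted to continuously differentiable functions. -/
theorem EC_equiv_diff : WEquiv EC diffP :=
  ⟨wred_EC_diffP, wred_diffP_EC⟩
end

section
/- For all n ≥ 1: LPO_n <_W LPO_{n+1}, i.e., LPO_n is continuously Weihrauch reducible to LPO_{n+1} but not conversely. -/
open Filter Topology

noncomputable def cntz (m : ℕ) (r : Baire) : ℕ :=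
  {i | 1 ≤ i ∧ i ≤ m ∧ isZeroSeq (projFin m i r)}.ncard

lemma cntz_finite (m : ℕ) (r : Baire) :
    {i | 1 ≤ i ∧ i ≤ m ∧ isZeroSeq (projFin m i r)}.Finite :=
  (Set.finite_Icc 1 m).subset fun i hi => Set.mem_Icc.2 ⟨hi.1, hi.2.1⟩

lemma cntz_le (m : ℕ) (r : Baire) : cntz m r ≤ m := by
  have h := Set.ncard_le_ncard (fun i hi => Set.mem_Icc.2 ⟨hi.1, hi.2.1⟩ :
    {i | 1 ≤ i ∧ i ≤ m ∧ isZeroSeq (projFin m i r)} ⊆ Set.Icc 1 m) (Set.finite_Icc 1 m)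
  rwa [← Finset.coe_Icc, Set.ncard_coe_finset, Nat.card_Icc, Nat.add_sub_cancel] at h

lemma LPOn_sol (m : ℕ) (r : Baire) : (LPOn m).sol r = {constSeq (cntz m r)} := rfl

/-- The inner reduction map for `LPOn n ≤ LPOn (n+1)`. -/
def Kred (n : ℕ) (r : Baire) : Baire := fun j =>
  if j % (n + 1) = n then 0 else r (n * (j / (n + 1)) + j % (n + 1))

lemma Kred_proj (n : ℕ) (r : Baire) {i : ℕ} (h1 : 1 ≤ i) (h2 : i ≤ n) :
    projFin (n + 1) i (Kred n r) = projFin n i r := by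
  funext k
  have e1 : (n + 1) * k + i - 1 = (n + 1) * k + (i - 1) := by omega
  have e2 : ((n + 1) * k + (i - 1)) % (n + 1) = i - 1 := by
    rw [Nat.mul_add_mod]; exact Nat.mod_eq_of_lt (by omega)
  have e3 : ((n + 1) * k + (i - 1)) / (n + 1) = k := by
    rw [Nat.mul_add_div (by omega)]
    rw [Nat.div_eq_of_lt (by omega)]
    omega
  show Kred n r ((n + 1) * k + i - 1) = r (n * k + i - 1)
  rw [e1]
  unfold Kred
  rw [e2, e3]
  have : ¬ (i - 1 = n) := by omega
  rw [if_neg this]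
  congr 1
  omega

lemma Kred_proj_top (n : ℕ) (r : Baire) :
    isZeroSeq (projFin (n + 1) (n + 1) (Kred n r)) := by
  intro k
  have e1 : (n + 1) * k + (n + 1) - 1 = (n + 1) * k + n := by omega
  show Kred n r ((n + 1) * k + (n + 1) - 1) = 0
  rw [e1]
  unfold Kred
  rw [if_pos (by rw [Nat.mul_add_mod]; exact Nat.mod_eq_of_lt (by omega))]

lemma cntz_Kred (n : ℕ) (r : Baire) : cntz (n + 1) (Kred n r) = cntz n r + 1 := by
  have hset : {i | 1 ≤ i ∧ i ≤ n + 1 ∧ isZeroSeq (projFin (n + 1) i (Kred n r))}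
      = insert (n + 1) {i | 1 ≤ i ∧ i ≤ n ∧ isZeroSeq (projFin n i r)} := by
    ext i
    simp only [Set.mem_setOf_eq, Set.mem_insert_iff]
    constructor
    · rintro ⟨h1, h2, h3⟩
      rcases eq_or_lt_of_le h2 with h | h
      · exact Or.inl h
      · refine Or.inr ⟨h1, by omega, ?_⟩
        rwa [Kred_proj n r h1 (by omega)] at h3
    · rintro (rfl | ⟨h1, h2, h3⟩)
      · exact ⟨by omega, le_rfl, Kred_proj_top n r⟩
      · exact ⟨h1, by omega, by rwa [Kred_proj n r h1 h2]⟩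
  unfold cntz
  rw [hset, Set.ncard_insert_of_notMem (by rintro ⟨-, h, -⟩; omega) (cntz_finite n r)]

lemma red_succ (n : ℕ) : WRed (LPOn n) (LPOn (n + 1)) := by
  refine ⟨Set.univ, Set.univ, Kred n, fun s _ => s 1 - 1, ?_, ?_, ?_⟩
  · apply Continuous.continuousOn
    apply continuous_pi
    intro j
    by_cases h : j % (n + 1) = n
    · simpa [Kred, h] using continuous_const
    · simpa [Kred, h] using continuous_apply (n * (j / (n + 1)) + j % (n + 1))
  · apply Continuous.continuousOn
    apply continuous_pi
    intro k
    exact (continuous_of_discreteTopology (f := fun m : ℕ => m - 1)).comp (continuous_apply 1)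
  · intro p _
    refine ⟨trivial, trivial, ?_⟩
    intro q hq
    rw [LPOn_sol] at hq
    rw [Set.mem_singleton_iff] at hq
    subst hq
    refine ⟨trivial, ?_⟩
    rw [LPOn_sol, Set.mem_singleton_iff]
    funext k
    show pairB p (constSeq (cntz (n + 1) (Kred n p))) 1 - 1 = cntz n p
    simp [pairB, constSeq, cntz_Kred]

lemma modulus_zero {H : Baire → Baire} {Hd : Set Baire} (hH : ContinuousOn H Hd)
    {s : Baire} (hs : s ∈ Hd) :
    ∃ N, ∀ s' ∈ Hd, (∀ m, m < N → s' m = s m) → H s' 0 = H s 0 := by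
  have h0 : ContinuousWithinAt (fun t => H t 0) Hd s :=
    (continuous_apply 0).continuousAt.comp_continuousWithinAt (hH s hs)
  have hmem : (fun t : Baire => H t 0) ⁻¹' {H s 0} ∈ nhdsWithin s Hd :=
    h0 ((isOpen_discrete ({H s 0} : Set ℕ)).mem_nhds rfl)
  rw [mem_nhdsWithin] at hmem
  obtain ⟨U, hUo, hsU, hUsub⟩ := hmem
  have hU : U ∈ nhds s := hUo.mem_nhds hsU
  rw [nhds_pi, Filter.mem_pi] at hU
  obtain ⟨I, hIfin, V, hV, hsub⟩ := hU
  refine ⟨hIfin.toFinset.sup id + 1, fun s' hs' hagree => ?_⟩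
  have hsU' : s' ∈ U := by
    apply hsub
    intro i hi
    have : s' i = s i :=
      hagree i (Nat.lt_succ_of_le (Finset.le_sup (f := id) (hIfin.mem_toFinset.2 hi)))
    rw [this]
    exact mem_of_mem_nhds (hV i)
  exact hUsub ⟨hsU', hs'⟩

lemma cntz_of_cols (n j : ℕ) (r : Baire)
    (hcols : ∀ i, 1 ≤ i → i ≤ n + 1 → (isZeroSeq (projFin (n + 1) i r) ↔ j < i)) :
    cntz (n + 1) r = n + 1 - j := by
  unfold cntz
  have hset : {i | 1 ≤ i ∧ i ≤ n + 1 ∧ isZeroSeq (projFin (n + 1) i r)}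
      = ↑(Finset.Icc (j + 1) (n + 1)) := by
    ext i
    simp only [Set.mem_setOf_eq, Finset.coe_Icc, Set.mem_Icc]
    constructor
    · rintro ⟨h1, h2, h3⟩
      have := (hcols i h1 h2).1 h3
      omega
    · rintro ⟨h1, h2⟩
      exact ⟨by omega, h2, (hcols i (by omega) h2).2 (by omega)⟩
  rw [hset, Set.ncard_coe_finset, Nat.card_Icc]
  omega

lemma not_red_succ (n : ℕ) : ¬ WRed (LPOn (n + 1)) (LPOn n) := by
  rintro ⟨Kd, Hd, K, H, hK, hH, hred⟩
  have key : ∀ r : Baire, pairB r (constSeq (cntz n (K r))) ∈ Hd ∧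
      H (pairB r (constSeq (cntz n (K r)))) = constSeq (cntz (n + 1) r) := by
    intro r
    obtain ⟨-, -, h3⟩ := hred r (Set.mem_univ r)
    have h := h3 (constSeq (cntz n (K r))) (by rw [LPOn_sol]; exact rfl)
    exact ⟨h.1, Set.mem_singleton_iff.1 h.2⟩
  have main : ∀ j, j ≤ n + 1 → ∃ (r : Baire) (M : ℕ) (S : Finset ℕ),
      S.card = j ∧ S ⊆ Finset.range (n + 1) ∧
      (∀ i, 1 ≤ i → i ≤ n + 1 → (isZeroSeq (projFin (n + 1) i r) ↔ j < i)) ∧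
      (∀ r'' : Baire, (∀ m, m < M → r'' m = r m) → cntz (n + 1) r'' ≤ n + 1 - j →
        cntz n (K r'') ∉ S) := by
    intro j
    induction j with
    | zero =>
      intro _
      refine ⟨fun _ => 0, 0, ∅, rfl, by simp, ?_, by simp⟩
      intro i h1 _
      exact iff_of_true (fun _ => rfl) h1
    | succ j ih =>
      intro hj1
      obtain ⟨r, M, S, hcard, hsub, hcols, hS⟩ := ih (by omega)
      have hcnt_r : cntz (n + 1) r = n + 1 - j := cntz_of_cols n j r hcols
      have haS : cntz n (K r) ∉ S := hS r (fun _ _ => rfl) (le_of_eq hcnt_r)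
      obtain ⟨hHd, hHval⟩ := key r
      obtain ⟨N, hN⟩ := modulus_zero hH hHd
      obtain ⟨pos, hposdef⟩ : ∃ p, p = (n + 1) * (M + N + 1) + j := ⟨_, rfl⟩
      have hbig : M + N + 1 ≤ (n + 1) * (M + N + 1) :=
        Nat.le_mul_of_pos_left _ (by omega)
      have hMpos : M < pos := by omega
      have hNpos : N < pos := by omega
      refine ⟨fun m => if m = pos then 1 else r m, pos + 1,
        insert (cntz n (K r)) S, ?_, ?_, ?_, ?_⟩
      · rw [Finset.card_insert_of_notMem haS, hcard]
      · intro x hx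
        rcases Finset.mem_insert.1 hx with rfl | hx
        · exact Finset.mem_range.2 (by have := cntz_le n (K r); omega)
        · exact hsub hx
      · intro i h1 h2
        by_cases hij : i = j + 1
        · subst hij
          refine iff_of_false ?_ (by omega)
          intro hz
          have hzL := hz (M + N + 1)
          have he : (n + 1) * (M + N + 1) + (j + 1) - 1 = pos := by omega
          simp only [projFin] at hzL
          rw [if_pos he] at hzL
          exact absurd hzL one_ne_zero
        · have hcol_eq : projFin (n + 1) i (fun m => if m = pos then 1 else r m)
              = projFin (n + 1) i r := by
            funext k
            show (if (n + 1) * k + i - 1 = pos then 1 else r ((n + 1) * k + i - 1))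
                = r ((n + 1) * k + i - 1)
            rw [if_neg ?_]
            intro he
            have h4 : ((n + 1) * k + (i - 1)) % (n + 1) = i - 1 := by
              rw [Nat.mul_add_mod]; exact Nat.mod_eq_of_lt (by omega)
            have h5 : ((n + 1) * (M + N + 1) + j) % (n + 1) = j := by
              rw [Nat.mul_add_mod]; exact Nat.mod_eq_of_lt (by omega)
            have he' : (n + 1) * k + (i - 1) = (n + 1) * (M + N + 1) + j := by omega
            rw [he'] at h4
            omega
          rw [hcol_eq, hcols i h1 h2]
          omega
      · intro r'' hagree hle
        rw [Finset.mem_insert]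
        push_neg
        constructor
        · intro heq
          obtain ⟨-, -, h3⟩ := hred r'' (Set.mem_univ r'')
          have hq : constSeq (cntz n (K r)) ∈ (LPOn n).sol (K r'') := by
            rw [LPOn_sol, heq]; exact rfl
          obtain ⟨hmem'', hval''⟩ := h3 (constSeq (cntz n (K r))) hq
          have h0 : H (pairB r'' (constSeq (cntz n (K r)))) 0
              = H (pairB r (constSeq (cntz n (K r)))) 0 := by
            apply hN _ hmem''
            intro m hm
            show (if m % 2 = 0 then r'' (m / 2) else constSeq (cntz n (K r)) (m / 2))
                = (if m % 2 = 0 then r (m / 2) else constSeq (cntz n (K r)) (m / 2))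
            by_cases hm2 : m % 2 = 0
            · rw [if_pos hm2, if_pos hm2,
                hagree (m / 2) (by have := Nat.div_le_self m 2; omega)]
              show (if m / 2 = pos then 1 else r (m / 2)) = r (m / 2)
              rw [if_neg (by have := Nat.div_le_self m 2; omega)]
            · rw [if_neg hm2, if_neg hm2]
          have hval : H (pairB r'' (constSeq (cntz n (K r)))) = constSeq (cntz (n + 1) r'') :=
            Set.mem_singleton_iff.1 hval''
          have e : cntz (n + 1) r'' = cntz (n + 1) r := by
            have e1 := congrFun hval 0
            have e2 := congrFun hHval 0
            rw [h0, e2] at e1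
            exact e1.symm
          rw [hcnt_r] at e
          omega
        · refine hS r'' ?_ (by omega)
          intro m hm
          rw [hagree m (by omega)]
          show (if m = pos then 1 else r m) = r m
          rw [if_neg (by omega)]
  obtain ⟨r, M, S, hcard, hsub, hcols, hS⟩ := main (n + 1) le_rfl
  have hSeq : S = Finset.range (n + 1) :=
    Finset.eq_of_subset_of_card_le hsub (by rw [hcard, Finset.card_range])
  have h1 : cntz n (K r) ∈ S := by
    rw [hSeq]
    exact Finset.mem_range.2 (by have := cntz_le n (K r); omega)
  exact hS r (fun _ _ => rfl) (by rw [cntz_of_cols n (n + 1) r hcols]) h1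

/-- For all `n ≥ 1`: `LPO_n <_W LPO_{n+1}`. -/
theorem LPOn_strict : ∀ n, 1 ≤ n → WLt (LPOn n) (LPOn (n + 1)) := by
  exact fun n _ => ⟨red_succ n, not_red_succ n⟩
end
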